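/- arXiv:2202.09985 — 2 statements merged into one kernel-verified Lean document; each statement's English description precedes it below -/
import Mathlib

section
/- Suppose the mechanism (Q, ū) is F-IC for some F ∈ 𝓘. Then θL < θL_F and θH_F < θH, and there exists ε > 0 such that I_F(θ) > 0 for all θ ∈ Θ with |θ − θL_F| < ε or |θ − θH_F| < ε. -/
open MeasureTheory Set Filter

/-- A cumulative distribution function on `[θL, θH]`. -/
structure CDF (θL θH : ℝ) where
  toFun : ℝ → ℝ
  mono : Monotone toFun
  right_continuous : ∀ x, ContinuousWithinAt toFun (Set.Ici x) x
  eq_zero : ∀ x, x < θL → toFun x = 0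
  eq_one : ∀ x, θH ≤ x → toFun x = 1

namespace CDF

variable {θL θH : ℝ}

/-- The Stieltjes function associated with a CDF. -/
noncomputable def stieltjes (F : CDF θL θH) : StieltjesFunction ℝ :=
  ⟨F.toFun, F.mono, F.right_continuous⟩

/-- The Lebesgue–Stieltjes measure of a CDF. -/
noncomputable def meas (F : CDF θL θH) : Measure ℝ := F.stieltjes.measure

/-- The integral `∫ φ dF`. -/
noncomputable def integ (F : CDF θL θH) (φ : ℝ → ℝ) : ℝ := ∫ θ, φ θ ∂F.meas

/-- The support of the distribution with CDF `F`. -/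
def supp (F : CDF θL θH) : Set ℝ :=
  {x | ∀ ε > 0, 0 < F.toFun (x + ε) - F.toFun (x - ε)}

/-- The left limit `F₋`. -/
noncomputable def leftLim (F : CDF θL θH) (x : ℝ) : ℝ := Function.leftLim F.toFun x

/-- The mean `∫ θ dF(θ)`. -/
noncomputable def mean (F : CDF θL θH) : ℝ := F.integ (fun θ => θ)

end CDF

/-- `I_F(θ) = ∫_{θL}^{θ} (F₀(t) − F(t)) dt`. -/
noncomputable def IFun {θL θH : ℝ} (F₀ F : CDF θL θH) (θ : ℝ) : ℝ :=
  ∫ t in θL..θ, (F₀.toFun t - F.toFun t)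

/-- `F ∈ 𝓘`: `F` is a feasible signal given the prior `F₀`. -/
def IsSignal {θL θH : ℝ} (F₀ F : CDF θL θH) : Prop :=
  (∀ θ ∈ Set.Icc θL θH, 0 ≤ IFun F₀ F θ) ∧ IFun F₀ F θH = 0

/-- The prior's support contains both endpoints. -/
def IsPrior {θL θH : ℝ} (F₀ : CDF θL θH) : Prop :=
  θL ∈ F₀.supp ∧ θH ∈ F₀.supp

/-- Assumptions on the information-cost function `c` (with derivatives `c'`, `c''`). -/
structure CostAssumptions (θL θH θ₀ : ℝ) (c c' c'' : ℝ → ℝ) : Prop where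
  cont : ContinuousOn c (Set.Icc θL θH)
  nonneg : ∀ θ ∈ Set.Icc θL θH, 0 ≤ c θ
  hasDeriv : ∀ θ ∈ Set.Ioo θL θH, HasDerivAt c (c' θ) θ
  hasDeriv2 : ∀ θ ∈ Set.Ioo θL θH, HasDerivAt c' (c'' θ) θ
  cont2 : ContinuousOn c'' (Set.Ioo θL θH)
  pos2 : ∀ θ ∈ Set.Ioo θL θH, 0 < c'' θ
  minAt : ∀ θ ∈ Set.Icc θL θH, c θ₀ ≤ c θ
  slopeBot : Filter.Tendsto c' (nhdsWithin θL (Set.Ioi θL)) Filter.atBot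
  slopeTop : Filter.Tendsto c' (nhdsWithin θH (Set.Iio θH)) Filter.atTop

/-- Assumptions on the production-cost function `κ` (with derivative `κ'`). -/
structure KappaAssumptions (θL θH qbar : ℝ) (κ κ' : ℝ → ℝ) : Prop where
  hasDeriv : ∀ q ∈ Set.Icc (0:ℝ) qbar, HasDerivWithinAt κ (κ' q) (Set.Icc 0 qbar) q
  contDeriv : ContinuousOn κ' (Set.Icc 0 qbar)
  strictMono : StrictMonoOn κ (Set.Icc 0 qbar)
  strictConvex : StrictConvexOn ℝ (Set.Icc 0 qbar) κ
  zero : κ 0 = 0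
  nonneg : ∀ q ∈ Set.Icc (0:ℝ) qbar, 0 ≤ κ q
  derivZero : κ' 0 ≤ θL
  derivTop : θH < κ' qbar

/-- An allocation: a nondecreasing map from types into `[0, q̄]`. -/
def IsAllocation (θL θH qbar : ℝ) (Q : ℝ → ℝ) : Prop :=
  MonotoneOn Q (Set.Icc θL θH) ∧ ∀ θ ∈ Set.Icc θL θH, Q θ ∈ Set.Icc 0 qbar

/-- The buyer's value `V_{Q,ū}(θ) = ū + ∫_{θL}^{θ} Q(t) dt`. -/
noncomputable def Vfun (θL : ℝ) (Q : ℝ → ℝ) (u θ : ℝ) : ℝ :=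
  u + ∫ t in θL..θ, Q t

/-- The mechanism `(Q, ū)` is `F`-incentive compatible. -/
def IsIC {θL θH : ℝ} (F₀ : CDF θL θH) (c : ℝ → ℝ) (Q : ℝ → ℝ) (u : ℝ)
    (F : CDF θL θH) : Prop :=
  IsSignal F₀ F ∧
  ∀ F' : CDF θL θH, IsSignal F₀ F' →
    F'.integ (fun θ => Vfun θL Q u θ - c θ) ≤ F.integ (fun θ => Vfun θL Q u θ - c θ)

/-- The monopolist's per-report profit `π_{Q,ū}(θ)`. -/
noncomputable def profit (θL : ℝ) (κ Q : ℝ → ℝ) (u θ : ℝ) : ℝ :=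
  θ * Q θ - Vfun θL Q u θ - κ (Q θ)

/-- `(Q, F)` is monopolist-optimal. -/
def MonopolistOptimal {θL θH : ℝ} (qbar : ℝ) (F₀ : CDF θL θH) (c κ : ℝ → ℝ)
    (Q : ℝ → ℝ) (F : CDF θL θH) : Prop :=
  IsAllocation θL θH qbar Q ∧ IsIC F₀ c Q 0 F ∧
  ∀ (Q' : ℝ → ℝ) (u' : ℝ) (F' : CDF θL θH),
    IsAllocation θL θH qbar Q' → 0 ≤ u' → IsIC F₀ c Q' u' F' →
    F'.integ (profit θL κ Q' u') ≤ F.integ (profit θL κ Q 0)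

/-- `P` is an `F`-shadow price. -/
def IsShadowPrice {θL θH : ℝ} (F₀ F : CDF θL θH) (P : ℝ → ℝ) : Prop :=
  (∃ K : NNReal, LipschitzOnWith K P (Set.Icc θL θH)) ∧
  ConvexOn ℝ (Set.Icc θL θH) P ∧
  ∀ a b : ℝ, Set.Ioo a b ⊆ {θ | θ ∈ Set.Icc θL θH ∧ 0 < IFun F₀ F θ} →
    ∃ m k : ℝ, ∀ θ ∈ Set.Ioo a b, P θ = m * θ + k

/-- `P` is an `F`-shadow price for `φ`. -/
def IsShadowPriceFor {θL θH : ℝ} (F₀ F : CDF θL θH) (φ P : ℝ → ℝ) : Prop :=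
  IsShadowPrice F₀ F P ∧ (∀ θ ∈ Set.Icc θL θH, φ θ ≤ P θ) ∧
  ∀ θ ∈ F.supp, P θ = φ θ

/-- `θL_F`, the minimum of the support of `F`. -/
noncomputable def thetaLF {θL θH : ℝ} (F : CDF θL θH) : ℝ := sInf F.supp

/-- `θH_F`, the maximum of the support of `F`. -/
noncomputable def thetaHF {θL θH : ℝ} (F : CDF θL θH) : ℝ := sSup F.supp

/-- `p` is an `F`-shadow derivative. -/
def IsShadowDeriv {θL θH : ℝ} (qbar : ℝ) (F₀ : CDF θL θH) (c' : ℝ → ℝ)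
    (F : CDF θL θH) (p : ℝ → ℝ) : Prop :=
  (∃ M : ℝ, ∀ θ ∈ Set.Icc θL θH, |p θ| ≤ M) ∧
  MonotoneOn p (Set.Icc θL θH) ∧
  (∀ a b : ℝ, Set.Ioo a b ⊆ {θ | θ ∈ Set.Icc θL θH ∧ 0 < IFun F₀ F θ} →
    ∀ x ∈ Set.Ioo a b, ∀ y ∈ Set.Ioo a b, p x = p y) ∧
  -c' (thetaLF F) ≤ p (thetaLF F) ∧
  p (thetaHF F) ≤ qbar - c' (thetaHF F)

/-- The allocation `Q^p` induced by a shadow derivative `p`. -/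
noncomputable def inducedAlloc {θL θH : ℝ} (qbar : ℝ) (c' : ℝ → ℝ)
    (F : CDF θL θH) (p : ℝ → ℝ) (θ : ℝ) : ℝ :=
  if θ < thetaLF F then max (p (thetaLF F) + c' θ) 0
  else if θ ≤ thetaHF F then p θ + c' θ
  else min (p (thetaHF F) + c' θ) qbar

/-- `Q` is `F`-information-cost-canceling. -/
def IsICC {θL θH : ℝ} (qbar : ℝ) (F₀ : CDF θL θH) (c' : ℝ → ℝ)
    (F : CDF θL θH) (Q : ℝ → ℝ) : Prop :=
  ∃ p : ℝ → ℝ, IsShadowDeriv qbar F₀ c' F p ∧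
    ∀ θ ∈ Set.Icc θL θH, Q θ = inducedAlloc qbar c' F p θ

/-- `φ` satisfies edge irrelevance: some maximizer over CDFs with the prior mean has
support in the open interval. -/
def EdgeIrrelevant {θL θH : ℝ} (F₀ : CDF θL θH) (φ : ℝ → ℝ) : Prop :=
  ∃ F' : CDF θL θH, F'.mean = F₀.mean ∧
    (∀ G : CDF θL θH, G.mean = F₀.mean → G.integ φ ≤ F'.integ φ) ∧
    F'.supp ⊆ Set.Ioo θL θH

/-- `θH_Q = inf {θ : Q(θ) = Q(θH)}`. -/
noncomputable def thetaHQ (θL θH : ℝ) (Q : ℝ → ℝ) : ℝ :=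
  sInf {θ | θ ∈ Set.Icc θL θH ∧ Q θ = Q θH}

/-- `θL_Q = sup {θ : Q(θ) = Q(θL)}`. -/
noncomputable def thetaLQ (θL θH : ℝ) (Q : ℝ → ℝ) : ℝ :=
  sSup {θ | θ ∈ Set.Icc θL θH ∧ Q θ = Q θL}

/-- The support of a (cumulative distribution) function `G : ℝ → ℝ`. -/
def suppOfFun (G : ℝ → ℝ) : Set ℝ := {x | ∀ ε > 0, 0 < G (x + ε) - G (x - ε)}

/-- The conditional CDF `F(·|θ ∈ [a, b])`. -/
noncomputable def condFun {θL θH : ℝ} (F : CDF θL θH) (a b θ : ℝ) : ℝ :=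
  if θ < a then 0
  else (F.toFun (min θ b) - F.leftLim a) / (F.toFun b - F.leftLim a)


namespace CDF

variable {θL θH : ℝ}

lemma toFun_nonneg (F : CDF θL θH) (x : ℝ) : 0 ≤ F.toFun x := by
  rcases lt_or_ge x θL with h | h
  · exact (F.eq_zero x h).ge
  · rw [← F.eq_zero (θL - 1) (by linarith)]
    exact F.mono (by linarith)

lemma toFun_le_one (F : CDF θL θH) (x : ℝ) : F.toFun x ≤ 1 := by
  rcases le_or_gt θH x with h | h
  · exact (F.eq_one x h).le
  · rw [← F.eq_one θH le_rfl]
    exact F.mono h.le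

lemma tendsto_bot (F : CDF θL θH) : Tendsto F.toFun atBot (nhds 0) := by
  refine tendsto_const_nhds.congr' ?_
  filter_upwards [eventually_lt_atBot θL] with x hx
  exact (F.eq_zero x hx).symm

lemma tendsto_top (F : CDF θL θH) : Tendsto F.toFun atTop (nhds 1) := by
  refine tendsto_const_nhds.congr' ?_
  filter_upwards [eventually_ge_atTop θH] with x hx
  exact (F.eq_one x hx).symm

@[simp] lemma stieltjes_apply (F : CDF θL θH) (x : ℝ) : F.stieltjes x = F.toFun x := rfl

lemma meas_Iic (F : CDF θL θH) (x : ℝ) :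
    F.meas (Set.Iic x) = ENNReal.ofReal (F.toFun x) := by
  rw [meas, StieltjesFunction.measure_Iic _ F.tendsto_bot, stieltjes_apply, sub_zero]

lemma meas_Ioc (F : CDF θL θH) (a b : ℝ) :
    F.meas (Set.Ioc a b) = ENNReal.ofReal (F.toFun b - F.toFun a) := by
  rw [meas, StieltjesFunction.measure_Ioc]; rfl

lemma meas_univ (F : CDF θL θH) : F.meas Set.univ = 1 := by
  rw [meas, StieltjesFunction.measure_univ _ F.tendsto_bot F.tendsto_top]
  simp

instance isProbability (F : CDF θL θH) : IsProbabilityMeasure F.meas :=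
  ⟨F.meas_univ⟩

lemma meas_Ioi (F : CDF θL θH) (x : ℝ) :
    F.meas (Set.Ioi x) = ENNReal.ofReal (1 - F.toFun x) := by
  rw [show Set.Ioi x = (Set.Iic x)ᶜ by simp, measure_compl measurableSet_Iic (measure_ne_top _ _), F.meas_univ, F.meas_Iic,
    ← ENNReal.ofReal_one, ← ENNReal.ofReal_sub _ (F.toFun_nonneg x)]

lemma meas_Iio_bot (F : CDF θL θH) : F.meas (Set.Iio θL) = 0 := by
  have h : Set.Iio θL = ⋃ n : ℕ, Set.Iic (θL - 1 / (n + 1)) := by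
    ext x
    simp only [Set.mem_Iio, Set.mem_iUnion, Set.mem_Iic]
    constructor
    · intro hx
      obtain ⟨n, hn⟩ := exists_nat_one_div_lt (sub_pos.2 hx)
      exact ⟨n, by linarith⟩
    · rintro ⟨n, hn⟩
      have : (0:ℝ) < 1 / (n + 1) := by positivity
      linarith
  rw [h]
  refine measure_iUnion_null fun n => ?_
  rw [F.meas_Iic, F.eq_zero]
  · simp
  · have : (0:ℝ) < 1 / (n + 1) := by positivity
    linarith

lemma meas_Ioi_top (F : CDF θL θH) : F.meas (Set.Ioi θH) = 0 := by
  rw [F.meas_Ioi, F.eq_one θH le_rfl]; simp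

lemma meas_compl_Icc (F : CDF θL θH) (hθ : θL ≤ θH) :
    F.meas (Set.Icc θL θH)ᶜ = 0 := by
  rw [show (Set.Icc θL θH)ᶜ = Set.Iio θL ∪ Set.Ioi θH by ext x; simp only [Set.mem_compl_iff,
    Set.mem_Icc, not_and_or, not_le, Set.mem_union, Set.mem_Iio, Set.mem_Ioi]]
  exact le_antisymm (le_trans (measure_union_le _ _)
    (by rw [F.meas_Iio_bot, F.meas_Ioi_top]; simp)) zero_le

lemma intervalIntegrable (F : CDF θL θH) (a b : ℝ) :
    IntervalIntegrable F.toFun MeasureTheory.volume a b :=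
  F.mono.intervalIntegrable

end CDF

namespace CDF

variable {θL θH : ℝ}

lemma supp_subset_Icc (F : CDF θL θH) (hθ : θL ≤ θH) : F.supp ⊆ Set.Icc θL θH := by
  intro x hx
  by_contra hmem
  rw [Set.mem_Icc, not_and_or, not_le, not_le] at hmem
  rcases hmem with h | h
  · have hε : 0 < (θL - x) / 2 := by linarith
    have := hx _ hε
    rw [F.eq_zero _ (by linarith), F.eq_zero _ (by linarith)] at this
    linarith
  · have hε : 0 < (x - θH) / 2 := by linarith
    have := hx _ hε
    rw [F.eq_one _ (by linarith), F.eq_one _ (by linarith)] at this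
    linarith

lemma bddBelow_posSet (F : CDF θL θH) : BddBelow {s | 0 < F.toFun s} :=
  ⟨θL, fun s hs => by
    have hs' : 0 < F.toFun s := hs
    by_contra h
    rw [F.eq_zero s (lt_of_not_ge h)] at hs'
    exact lt_irrefl 0 hs'⟩

lemma bddAbove_ltOneSet (F : CDF θL θH) : BddAbove {s | F.toFun s < 1} :=
  ⟨θH, fun s hs => by
    have hs' : F.toFun s < 1 := hs
    by_contra h
    rw [F.eq_one s (le_of_not_ge h)] at hs'
    exact lt_irrefl 1 hs'⟩

lemma bot_point_mem_supp (F : CDF θL θH) : sInf {s | 0 < F.toFun s} ∈ F.supp := by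
  set S : Set ℝ := {s | 0 < F.toFun s} with hS
  have hne : S.Nonempty := ⟨θH, by simp only [hS, Set.mem_setOf_eq, F.eq_one θH le_rfl]; norm_num⟩
  intro ε hε
  obtain ⟨s, hsS, hs⟩ := Real.lt_sInf_add_pos hne hε
  have hsS' : 0 < F.toFun s := hsS
  have h1 : 0 < F.toFun (sInf S + ε) := lt_of_lt_of_le hsS' (F.mono hs.le)
  have h2 : F.toFun (sInf S - ε) = 0 := by
    by_contra h
    have hmem : sInf S - ε ∈ S := lt_of_le_of_ne (F.toFun_nonneg _) (Ne.symm h)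
    have := csInf_le F.bddBelow_posSet hmem
    linarith
  linarith

lemma top_point_mem_supp (F : CDF θL θH) : sSup {s | F.toFun s < 1} ∈ F.supp := by
  set S : Set ℝ := {s | F.toFun s < 1} with hS
  have hne : S.Nonempty := ⟨θL - 1, by
    simp only [hS, Set.mem_setOf_eq, F.eq_zero (θL - 1) (by linarith)]; norm_num⟩
  intro ε hε
  obtain ⟨s, hsS, hs⟩ := exists_lt_of_lt_csSup hne (by linarith : sSup S - ε < sSup S)
  have hsS' : F.toFun s < 1 := hsS
  have h2 : F.toFun (sSup S - ε) < 1 := lt_of_le_of_lt (F.mono hs.le) hsS'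
  have h1 : F.toFun (sSup S + ε) = 1 := by
    by_contra h
    have hmem : sSup S + ε ∈ S := lt_of_le_of_ne (F.toFun_le_one _) h
    have := le_csSup F.bddAbove_ltOneSet hmem
    linarith
  linarith

lemma supp_nonempty (F : CDF θL θH) : F.supp.Nonempty := ⟨_, F.bot_point_mem_supp⟩

lemma bddBelow_supp (F : CDF θL θH) : BddBelow F.supp :=
  ⟨θL, fun s hs => by
    by_contra h
    have hε' : 0 < (θL - s)/2 := by linarith [lt_of_not_ge h]
    have := hs _ hε'
    rw [F.eq_zero _ (by push_neg at h; linarith), F.eq_zero _ (by push_neg at h; linarith)] at this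
    linarith⟩

lemma bddAbove_supp (F : CDF θL θH) : BddAbove F.supp :=
  ⟨θH, fun s hs => by
    by_contra h
    have hε' : 0 < (s - θH)/2 := by linarith [lt_of_not_ge h]
    have := hs _ hε'
    rw [F.eq_one _ (by push_neg at h; linarith), F.eq_one _ (by push_neg at h; linarith)] at this
    linarith⟩

lemma thetaLF_mem_supp (F : CDF θL θH) : thetaLF F ∈ F.supp := by
  intro ε hε
  obtain ⟨x, hxS, hx⟩ := Real.lt_sInf_add_pos F.supp_nonempty (half_pos hε)
  have hx0 : sInf F.supp ≤ x := csInf_le F.bddBelow_supp hxS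
  have := hxS _ (half_pos hε)
  have l1 : F.toFun (x + ε/2) ≤ F.toFun (thetaLF F + ε) := F.mono (by unfold thetaLF; linarith)
  have l2 : F.toFun (thetaLF F - ε) ≤ F.toFun (x - ε/2) := F.mono (by unfold thetaLF; linarith)
  linarith

lemma thetaHF_mem_supp (F : CDF θL θH) : thetaHF F ∈ F.supp := by
  intro ε hε
  obtain ⟨x, hxS, hx⟩ := exists_lt_of_lt_csSup F.supp_nonempty
    (by linarith : sSup F.supp - ε/2 < sSup F.supp)
  have hx0 : x ≤ sSup F.supp := le_csSup F.bddAbove_supp hxS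
  have := hxS _ (half_pos hε)
  have l1 : F.toFun (x + ε/2) ≤ F.toFun (thetaHF F + ε) := F.mono (by unfold thetaHF; linarith)
  have l2 : F.toFun (thetaHF F - ε) ≤ F.toFun (x - ε/2) := F.mono (by unfold thetaHF; linarith)
  linarith

lemma thetaLF_mem_Icc (F : CDF θL θH) (hθ : θL ≤ θH) : thetaLF F ∈ Set.Icc θL θH :=
  F.supp_subset_Icc hθ F.thetaLF_mem_supp

lemma thetaHF_mem_Icc (F : CDF θL θH) (hθ : θL ≤ θH) : thetaHF F ∈ Set.Icc θL θH :=
  F.supp_subset_Icc hθ F.thetaHF_mem_supp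

lemma toFun_eq_zero_of_lt_thetaLF (F : CDF θL θH) {t : ℝ} (ht : t < thetaLF F) :
    F.toFun t = 0 := by
  by_contra h
  have hmem : t ∈ {s | 0 < F.toFun s} := lt_of_le_of_ne (F.toFun_nonneg t) (Ne.symm h)
  have h1 : sInf {s | 0 < F.toFun s} ≤ t := csInf_le F.bddBelow_posSet hmem
  have h2 : thetaLF F ≤ sInf {s | 0 < F.toFun s} := csInf_le F.bddBelow_supp F.bot_point_mem_supp
  linarith

lemma toFun_eq_one_of_thetaHF_lt (F : CDF θL θH) {t : ℝ} (ht : thetaHF F < t) :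
    F.toFun t = 1 := by
  by_contra h
  have hmem : t ∈ {s | F.toFun s < 1} := lt_of_le_of_ne (F.toFun_le_one t) h
  have h1 : t ≤ sSup {s | F.toFun s < 1} := le_csSup F.bddAbove_ltOneSet hmem
  have h2 : sSup {s | F.toFun s < 1} ≤ thetaHF F := le_csSup F.bddAbove_supp F.top_point_mem_supp
  linarith

lemma toFun_pos_of_thetaLF_lt (F : CDF θL θH) {t : ℝ} (ht : thetaLF F < t) :
    0 < F.toFun t := by
  have h := F.thetaLF_mem_supp (t - thetaLF F) (by linarith)
  have h1 : thetaLF F + (t - thetaLF F) = t := by ring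
  rw [h1] at h
  have := F.toFun_nonneg (thetaLF F - (t - thetaLF F))
  linarith

lemma toFun_lt_one_of_lt_thetaHF (F : CDF θL θH) {t : ℝ} (ht : t < thetaHF F) :
    F.toFun t < 1 := by
  have h := F.thetaHF_mem_supp (thetaHF F - t) (by linarith)
  have h1 : thetaHF F - (thetaHF F - t) = t := by ring
  rw [h1] at h
  have := F.toFun_le_one (thetaHF F + (thetaHF F - t))
  linarith

end CDF

namespace CDF

open MeasureTheory

variable {θL θH : ℝ}

lemma layercake_Iic (F : CDF θL θH) (hθ : θL ≤ θH) {p : ℝ} (hp : θL ≤ p) :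
    ∫ θ in Set.Iic p, (p - θ) ∂F.meas = ∫ t in θL..p, F.toFun t := by
  set μ := F.meas with hμ
  -- LHS as lintegral
  have h1 : ∫ θ in Set.Iic p, (p - θ) ∂μ
      = (∫⁻ θ in Set.Iic p, ENNReal.ofReal (p - θ) ∂μ).toReal := by
    rw [integral_eq_lintegral_of_nonneg_ae]
    · exact (ae_restrict_iff' measurableSet_Iic).2 (Filter.Eventually.of_forall
        fun θ hθ' => by simp only [Pi.zero_apply]; exact sub_nonneg.2 hθ')
    · exact (continuous_const.sub continuous_id).aestronglyMeasurable.restrict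
  -- extend to univ
  have h2 : ∫⁻ θ in Set.Iic p, ENNReal.ofReal (p - θ) ∂μ
      = ∫⁻ θ, ENNReal.ofReal (p - θ) ∂μ := by
    have hres := lintegral_add_compl (μ := μ) (A := Set.Iic p)
      (fun θ => ENNReal.ofReal (p - θ)) measurableSet_Iic
    have hz : ∫⁻ θ in (Set.Iic p)ᶜ, ENNReal.ofReal (p - θ) ∂μ
        = ∫⁻ θ in (Set.Iic p)ᶜ, 0 ∂μ := by
      refine setLIntegral_congr_fun measurableSet_Iic.compl
        (fun θ hθ' => ?_)
      have hgt : p < θ := by simpa [Set.mem_compl_iff] using hθ'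
      simp [ENNReal.ofReal_eq_zero.2 (by linarith : p - θ ≤ 0)]
    rw [← hres, hz, lintegral_zero, add_zero]
  -- product set trick
  set S : Set (ℝ × ℝ) := {z | z.1 ≤ z.2 ∧ z.2 < p} with hSdef
  have hSm : MeasurableSet S :=
    (measurableSet_le measurable_fst measurable_snd).inter
      (measurable_snd measurableSet_Iio)
  set T : Set (ℝ × ℝ) := {z | z.2 ≤ z.1 ∧ z.1 < p} with hTdef
  have hTm : MeasurableSet T :=
    (measurableSet_le measurable_snd measurable_fst).inter
      (measurable_fst measurableSet_Iio)
  have h3 : ∫⁻ θ, ENNReal.ofReal (p - θ) ∂μ = (μ.prod volume) S := by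
    rw [Measure.prod_apply hSm]
    refine lintegral_congr fun θ => ?_
    have : Prod.mk θ ⁻¹' S = Set.Ico θ p := by
      ext t; simp [hSdef, Set.mem_Ico]
    rw [this, Real.volume_Ico]
  have h4 : (μ.prod volume) S = (volume.prod μ) T := by
    rw [← Measure.prod_swap, Measure.map_apply measurable_swap hSm]
    rfl
  have h5 : (volume.prod μ) T = ∫⁻ t in Set.Iio p, ENNReal.ofReal (F.toFun t) := by
    rw [Measure.prod_apply hTm]
    have : ∀ t : ℝ, μ (Prod.mk t ⁻¹' T) =
        (Set.Iio p).indicator (fun t => ENNReal.ofReal (F.toFun t)) t := by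
      intro t
      by_cases ht : t < p
      · have : Prod.mk t ⁻¹' T = Set.Iic t := by
          ext θ; simp [hTdef, ht]
        rw [this, F.meas_Iic, Set.indicator_of_mem (Set.mem_Iio.2 ht)]
      · have : Prod.mk t ⁻¹' T = ∅ := by
          ext θ; simp [hTdef, ht]
        rw [this, measure_empty, Set.indicator_of_notMem (by simpa using ht)]
    rw [lintegral_congr this, lintegral_indicator measurableSet_Iio]
  have h6 : ∫⁻ t in Set.Iio p, ENNReal.ofReal (F.toFun t)
      = ∫⁻ t in Set.Ico θL p, ENNReal.ofReal (F.toFun t) := by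
    have hsplit : Set.Iio p = Set.Iio θL ∪ Set.Ico θL p := by
      rw [Set.Iio_union_Ico_eq_Iio hp]
    rw [hsplit, lintegral_union measurableSet_Ico (by
      rw [Set.disjoint_iff]; rintro x ⟨h1', h2'⟩; exact absurd h2'.1 (not_le.2 h1'))]
    have : ∫⁻ t in Set.Iio θL, ENNReal.ofReal (F.toFun t) = ∫⁻ t in Set.Iio θL, 0 := by
      refine setLIntegral_congr_fun measurableSet_Iio (
        (fun t ht => by rw [F.eq_zero t ht, ENNReal.ofReal_zero]))
    rw [this, lintegral_zero, zero_add]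
  -- RHS
  have h7 : ∫ t in θL..p, F.toFun t
      = (∫⁻ t in Set.Ico θL p, ENNReal.ofReal (F.toFun t)).toReal := by
    rw [intervalIntegral.integral_of_le hp, setIntegral_congr_set Ioc_ae_eq_Icc,
      ← setIntegral_congr_set Ico_ae_eq_Icc, integral_eq_lintegral_of_nonneg_ae]
    · exact Filter.Eventually.of_forall fun t => F.toFun_nonneg t
    · exact F.mono.measurable.aestronglyMeasurable.restrict
  rw [h1, h2, h3, h4, h5, h6, h7]

end CDF

namespace CDF

open MeasureTheory

variable {θL θH : ℝ}

lemma layercake_Ici (F : CDF θL θH) {y : ℝ} (hy : y ≤ θH) :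
    ∫ θ in Set.Ici y, (θ - y) ∂F.meas = ∫ t in y..θH, (1 - F.toFun t) := by
  set μ := F.meas with hμ
  have h1 : ∫ θ in Set.Ici y, (θ - y) ∂μ
      = (∫⁻ θ in Set.Ici y, ENNReal.ofReal (θ - y) ∂μ).toReal := by
    rw [integral_eq_lintegral_of_nonneg_ae]
    · exact (ae_restrict_iff' measurableSet_Ici).2 (Filter.Eventually.of_forall
        fun θ hθ' => by simp only [Pi.zero_apply]; exact sub_nonneg.2 hθ')
    · exact (continuous_id.sub continuous_const).aestronglyMeasurable.restrict
  have h2 : ∫⁻ θ in Set.Ici y, ENNReal.ofReal (θ - y) ∂μ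
      = ∫⁻ θ, ENNReal.ofReal (θ - y) ∂μ := by
    have hres := lintegral_add_compl (μ := μ) (A := Set.Ici y)
      (fun θ => ENNReal.ofReal (θ - y)) measurableSet_Ici
    have hz : ∫⁻ θ in (Set.Ici y)ᶜ, ENNReal.ofReal (θ - y) ∂μ
        = ∫⁻ θ in (Set.Ici y)ᶜ, 0 ∂μ := by
      refine setLIntegral_congr_fun measurableSet_Ici.compl
        (fun θ hθ' => ?_)
      have hgt : θ < y := by simpa [Set.mem_compl_iff] using hθ'
      simp [ENNReal.ofReal_eq_zero.2 (by linarith : θ - y ≤ 0)]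
    rw [← hres, hz, lintegral_zero, add_zero]
  set S : Set (ℝ × ℝ) := {z | y ≤ z.2 ∧ z.2 < z.1} with hSdef
  have hSm : MeasurableSet S :=
    (measurable_snd measurableSet_Ici).inter
      (measurableSet_lt measurable_snd measurable_fst)
  set T : Set (ℝ × ℝ) := {z | y ≤ z.1 ∧ z.1 < z.2} with hTdef
  have hTm : MeasurableSet T :=
    (measurable_fst measurableSet_Ici).inter
      (measurableSet_lt measurable_fst measurable_snd)
  have h3 : ∫⁻ θ, ENNReal.ofReal (θ - y) ∂μ = (μ.prod volume) S := by
    rw [Measure.prod_apply hSm]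
    refine lintegral_congr fun θ => ?_
    have : Prod.mk θ ⁻¹' S = Set.Ico y θ := by
      ext t; simp [hSdef, Set.mem_Ico]
    rw [this, Real.volume_Ico]
  have h4 : (μ.prod volume) S = (volume.prod μ) T := by
    rw [← Measure.prod_swap, Measure.map_apply measurable_swap hSm]
    rfl
  have h5 : (volume.prod μ) T = ∫⁻ t in Set.Ici y, ENNReal.ofReal (1 - F.toFun t) := by
    rw [Measure.prod_apply hTm]
    have : ∀ t : ℝ, μ (Prod.mk t ⁻¹' T) =
        (Set.Ici y).indicator (fun t => ENNReal.ofReal (1 - F.toFun t)) t := by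
      intro t
      by_cases ht : y ≤ t
      · have : Prod.mk t ⁻¹' T = Set.Ioi t := by
          ext θ; simp [hTdef, ht]
        rw [this, F.meas_Ioi, Set.indicator_of_mem (Set.mem_Ici.2 ht)]
      · have : Prod.mk t ⁻¹' T = ∅ := by
          ext θ; simp [hTdef, ht]
        rw [this, measure_empty, Set.indicator_of_notMem (by simpa using ht)]
    rw [lintegral_congr this, lintegral_indicator measurableSet_Ici]
  have h6 : ∫⁻ t in Set.Ici y, ENNReal.ofReal (1 - F.toFun t)
      = ∫⁻ t in Set.Ico y θH, ENNReal.ofReal (1 - F.toFun t) := by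
    have hsplit : Set.Ici y = Set.Ico y θH ∪ Set.Ici θH := by
      rw [Set.Ico_union_Ici_eq_Ici hy]
    rw [hsplit, lintegral_union measurableSet_Ici (by
      rw [Set.disjoint_iff]; rintro x ⟨h1', h2'⟩; exact absurd h2' (not_le.2 h1'.2))]
    have : ∫⁻ t in Set.Ici θH, ENNReal.ofReal (1 - F.toFun t) = ∫⁻ t in Set.Ici θH, 0 := by
      refine setLIntegral_congr_fun measurableSet_Ici (
        (fun t ht => by rw [F.eq_one t ht, sub_self, ENNReal.ofReal_zero]))
    rw [this, lintegral_zero, add_zero]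
  have h7 : ∫ t in y..θH, (1 - F.toFun t)
      = (∫⁻ t in Set.Ico y θH, ENNReal.ofReal (1 - F.toFun t)).toReal := by
    rw [intervalIntegral.integral_of_le hy, setIntegral_congr_set Ioc_ae_eq_Icc,
      ← setIntegral_congr_set Ico_ae_eq_Icc, integral_eq_lintegral_of_nonneg_ae]
    · exact Filter.Eventually.of_forall fun t => sub_nonneg.2 (F.toFun_le_one t)
    · exact (measurable_const.sub F.mono.measurable).aestronglyMeasurable.restrict
  rw [h1, h2, h3, h4, h5, h6, h7]

end CDF

namespace CDF

open MeasureTheory Topology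

variable {θL θH : ℝ}

lemma leftLim_congr_Ioo {f g : ℝ → ℝ} (hf : Monotone f) (hg : Monotone g) {w x : ℝ}
    (hwx : w < x) (h : ∀ t ∈ Set.Ioo w x, f t = g t) :
    Function.leftLim f x = Function.leftLim g x := by
  have hm : Set.Ioo w x ∈ 𝓝[<] x := Ioo_mem_nhdsLT_of_mem ⟨hwx, le_rfl⟩
  have hee : f =ᶠ[𝓝[<] x] g := by filter_upwards [hm] with t ht using h t ht
  exact tendsto_nhds_unique ((hf.tendsto_leftLim x).congr' hee) (hg.tendsto_leftLim x)

lemma leftLim_eq_const_of_Ioo {f : ℝ → ℝ} (hf : Monotone f) {w x c : ℝ}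
    (hwx : w < x) (h : ∀ t ∈ Set.Ioo w x, f t = c) :
    Function.leftLim f x = c := by
  have hm : Set.Ioo w x ∈ 𝓝[<] x := Ioo_mem_nhdsLT_of_mem ⟨hwx, le_rfl⟩
  have hee : f =ᶠ[𝓝[<] x] (fun _ => c) := by filter_upwards [hm] with t ht using h t ht
  exact tendsto_nhds_unique ((hf.tendsto_leftLim x).congr' hee) tendsto_const_nhds

lemma meas_Ici' (F : CDF θL θH) (x : ℝ) :
    F.meas (Set.Ici x) = ENNReal.ofReal (1 - Function.leftLim F.toFun x) := by
  rw [meas, StieltjesFunction.measure_Ici _ F.tendsto_top]; rfl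

lemma meas_Iio' (F : CDF θL θH) (x : ℝ) :
    F.meas (Set.Iio x) = ENNReal.ofReal (Function.leftLim F.toFun x) := by
  have h : Set.Iio x = (Set.Ici x)ᶜ := by simp
  rw [h, measure_compl measurableSet_Ici (measure_ne_top _ _), F.meas_univ, F.meas_Ici']
  have h0 : 0 ≤ Function.leftLim F.toFun x := by
    have := F.mono.le_leftLim (sub_one_lt x)
    linarith [F.toFun_nonneg (x - 1)]
  have h1 : Function.leftLim F.toFun x ≤ 1 := by
    have := F.mono.leftLim_le (le_refl x)
    linarith [F.toFun_le_one x]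
  rw [← ENNReal.ofReal_one, ← ENNReal.ofReal_sub _ (by linarith)]
  norm_num

lemma meas_Ioo' (F : CDF θL θH) (a b : ℝ) :
    F.meas (Set.Ioo a b) = ENNReal.ofReal (Function.leftLim F.toFun b - F.toFun a) := by
  rw [meas, StieltjesFunction.measure_Ioo]; rfl

variable (F : CDF θL θH) {p y : ℝ}

/-- The truncation deviation: all mass below `p` is moved to `p`, all mass above `y`
is moved to `y`. -/
noncomputable def trunc (p y : ℝ) (hp : θL < p) (hpy : p < y) (hyH : y ≤ θH) :
    CDF θL θH where
  toFun θ := if θ < p then 0 else if θ < y then F.toFun θ else 1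
  mono a b hab := by
    dsimp only
    split_ifs <;>
      first
      | exact le_rfl
      | exact F.toFun_nonneg _
      | exact zero_le_one
      | exact F.mono hab
      | exact F.toFun_le_one _
      | linarith
  right_continuous x := by
    rcases lt_or_ge x p with hx | hx
    · have hev : (fun θ => if θ < p then (0:ℝ) else if θ < y then F.toFun θ else 1)
          =ᶠ[𝓝[Set.Ici x] x] (fun _ => (0:ℝ)) := by
        filter_upwards [mem_nhdsWithin_of_mem_nhds (Iio_mem_nhds hx)] with θ hθ
        rw [if_pos (Set.mem_Iio.1 hθ)]
      exact continuousWithinAt_const.congr_of_eventuallyEq hev (by simp [hx])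
    · rcases lt_or_ge x y with hxy | hxy
      · have hev : (fun θ => if θ < p then (0:ℝ) else if θ < y then F.toFun θ else 1)
            =ᶠ[𝓝[Set.Ici x] x] F.toFun := by
          filter_upwards [mem_nhdsWithin_of_mem_nhds (Iio_mem_nhds hxy),
            self_mem_nhdsWithin] with θ h1 h2
          have : ¬ θ < p := not_lt.2 (le_trans hx h2)
          rw [if_neg this, if_pos (Set.mem_Iio.1 h1)]
        exact (F.right_continuous x).congr_of_eventuallyEq hev
          (by simp [not_lt.2 hx, hxy])
      · have hev : (fun θ => if θ < p then (0:ℝ) else if θ < y then F.toFun θ else 1)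
            =ᶠ[𝓝[Set.Ici x] x] (fun _ => (1:ℝ)) := by
          filter_upwards [self_mem_nhdsWithin] with θ h2
          have h3 : ¬ θ < y := not_lt.2 (le_trans hxy h2)
          have h4 : ¬ θ < p := not_lt.2 (le_trans (le_trans hpy.le hxy) h2)
          simp [h3, h4]
        exact continuousWithinAt_const.congr_of_eventuallyEq hev
          (by simp [not_lt.2 hxy, not_lt.2 (le_trans hpy.le hxy)])
  eq_zero θ hθ := by simp [lt_trans hθ hp]
  eq_one θ hθ := by
    have h1 : ¬ θ < y := not_lt.2 (le_trans hyH hθ)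
    have h2 : ¬ θ < p := not_lt.2 (le_trans (le_trans hpy.le hyH) hθ)
    simp [h1, h2]

variable (hp : θL < p) (hpy : p < y) (hyH : y ≤ θH)

lemma trunc_toFun (θ : ℝ) :
    (F.trunc p y hp hpy hyH).toFun θ = if θ < p then 0 else if θ < y then F.toFun θ else 1 := rfl

lemma trunc_meas_Iio_p : (F.trunc p y hp hpy hyH).meas (Set.Iio p) = 0 := by
  rw [meas_Iio']
  have : Function.leftLim (F.trunc p y hp hpy hyH).toFun p = 0 :=
    leftLim_eq_const_of_Ioo (F.trunc p y hp hpy hyH).mono (sub_one_lt p)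
      (fun t ht => by rw [trunc_toFun, if_pos ht.2])
  rw [this]; simp

lemma trunc_meas_Ioi_y : (F.trunc p y hp hpy hyH).meas (Set.Ioi y) = 0 := by
  rw [meas_Ioi, trunc_toFun, if_neg (not_lt.2 hpy.le), if_neg (lt_irrefl y)]; simp

lemma trunc_leftLim_y : Function.leftLim (F.trunc p y hp hpy hyH).toFun y
    = Function.leftLim F.toFun y := by
  refine leftLim_congr_Ioo (F.trunc p y hp hpy hyH).mono F.mono hpy (fun t ht => ?_)
  rw [trunc_toFun, if_neg (not_lt.2 ht.1.le), if_pos ht.2]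

lemma trunc_meas_singleton_p :
    (F.trunc p y hp hpy hyH).meas {p} = ENNReal.ofReal (F.toFun p) := by
  have h : {p} = Set.Iic p \ Set.Iio p := by
    ext t; simp [le_antisymm_iff, and_comm]
  rw [h, measure_diff Set.Iio_subset_Iic_self measurableSet_Iio.nullMeasurableSet
    (measure_ne_top _ _), trunc_meas_Iio_p, meas_Iic, tsub_zero, trunc_toFun,
    if_neg (lt_irrefl p), if_pos hpy]

lemma trunc_meas_singleton_y :
    (F.trunc p y hp hpy hyH).meas {y} = F.meas (Set.Ici y) := by
  have h : {y} = Set.Ici y \ Set.Ioi y := by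
    ext t; simp [le_antisymm_iff, and_comm]
  rw [h, measure_diff Set.Ioi_subset_Ici_self measurableSet_Ioi.nullMeasurableSet
    (measure_ne_top _ _), trunc_meas_Ioi_y, meas_Ici', meas_Ici', tsub_zero, trunc_leftLim_y]

lemma trunc_restrict_Ioo :
    (F.trunc p y hp hpy hyH).meas.restrict (Set.Ioo p y) = F.meas.restrict (Set.Ioo p y) := by
  refine Measure.ext_of_Ioc' _ _ (fun a b hab => ?_) (fun a b hab => ?_)
  · exact measure_ne_top _ _
  · rw [Measure.restrict_apply measurableSet_Ioc, Measure.restrict_apply measurableSet_Ioc]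
    rcases le_or_gt b a with hba | hba
    · simp [Set.Ioc_eq_empty (not_lt.2 hba)]
    have hint : Set.Ioc a b ∩ Set.Ioo p y =
        if b < y then Set.Ioc (max a p) b else Set.Ioo (max a p) y := by
      split_ifs with hby
      · ext t
        simp only [Set.mem_inter_iff, Set.mem_Ioc, Set.mem_Ioo, max_lt_iff, Set.mem_Ioc]
        constructor
        · rintro ⟨⟨h1, h2⟩, h3, h4⟩; exact ⟨⟨h1, h3⟩, h2⟩
        · rintro ⟨⟨h1, h3⟩, h2⟩; exact ⟨⟨h1, h2⟩, h3, lt_of_le_of_lt h2 hby⟩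
      · ext t
        simp only [Set.mem_inter_iff, Set.mem_Ioc, Set.mem_Ioo, max_lt_iff]
        constructor
        · rintro ⟨⟨h1, h2⟩, h3, h4⟩; exact ⟨⟨h1, h3⟩, h4⟩
        · rintro ⟨⟨h1, h3⟩, h4⟩; exact ⟨⟨h1, le_of_lt (lt_of_lt_of_le h4 (not_lt.1 hby))⟩, h3, h4⟩
    rw [hint]
    split_ifs with hby
    · rcases le_or_gt b (max a p) with hbm | hbm
      · simp [Set.Ioc_eq_empty (not_lt.2 hbm)]
      rw [meas_Ioc, meas_Ioc, trunc_toFun, trunc_toFun]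
      have h1 : ¬ b < p := not_lt.2 (le_trans (le_max_right a p) hbm.le)
      have h2 : ¬ max a p < p := not_lt.2 (le_max_right a p)
      rcases lt_or_ge (max a p) y with h3 | h3
      · rw [if_neg h1, if_pos hby, if_neg h2, if_pos h3]
      · exact absurd (lt_of_le_of_lt h3 (lt_of_lt_of_le hbm hby.le)) (lt_irrefl y)
    · rcases le_or_gt y (max a p) with hym | hym
      · simp [Set.Ioo_eq_empty (not_lt.2 hym)]
      rw [meas_Ioo', meas_Ioo', trunc_leftLim_y, trunc_toFun]
      have h2 : ¬ max a p < p := not_lt.2 (le_max_right a p)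
      rw [if_neg h2, if_pos hym]

end CDF

namespace CDF

open MeasureTheory Topology

variable {θL θH : ℝ} (F : CDF θL θH) {p y : ℝ}

lemma restrict_Icc_eq (hθ : θL ≤ θH) : F.meas.restrict (Set.Icc θL θH) = F.meas :=
  Measure.restrict_eq_self_of_ae_mem (ae_iff.2 (F.meas_compl_Icc hθ))

lemma integrable_of_contOn (hθ : θL ≤ θH) {φ : ℝ → ℝ}
    (hφ : ContinuousOn φ (Set.Icc θL θH)) : Integrable φ F.meas := by
  rw [← F.restrict_Icc_eq hθ]
  exact hφ.integrableOn_compact isCompact_Icc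

/-- The truncation is a signal whenever `F` is, provided mass balance holds. -/
lemma trunc_isSignal (F₀ : CDF θL θH) (hsig : IsSignal F₀ F)
    (hp : θL < p) (hpy : p < y) (hyH : y ≤ θH)
    (hαβ : ∫ t in θL..p, F.toFun t = ∫ t in y..θH, (1 - F.toFun t)) :
    IsSignal F₀ (F.trunc p y hp hpy hyH) := by
  set T := F.trunc p y hp hpy hyH with hT
  -- IFun decomposition
  have hIF : ∀ θ : ℝ, IFun F₀ T θ = IFun F₀ F θ +
      ((∫ t in θL..θ, F.toFun t) - ∫ t in θL..θ, T.toFun t) := by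
    intro θ
    rw [IFun, IFun, intervalIntegral.integral_sub (F₀.intervalIntegrable θL θ)
      (T.intervalIntegrable θL θ), intervalIntegral.integral_sub (F₀.intervalIntegrable θL θ)
      (F.intervalIntegrable θL θ)]
    ring
  -- integral of T up to θ, case analysis
  have hTzero : ∀ θ ≤ p, θL ≤ θ → (∫ t in θL..θ, T.toFun t) = 0 := by
    intro θ hθp hθL
    rw [intervalIntegral.integral_of_le hθL, ← setIntegral_congr_set Ioo_ae_eq_Ioc]
    have hcong : ∀ t ∈ Set.Ioo θL θ, T.toFun t = (0:ℝ) := by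
      intro t ht
      rw [hT, F.trunc_toFun hp hpy hyH, if_pos (lt_of_lt_of_le ht.2 hθp)]
    rw [setIntegral_congr_fun measurableSet_Ioo hcong]
    simp
  have hTmid : ∀ θ, p ≤ θ → θ ≤ y → (∫ t in θL..θ, T.toFun t) = ∫ t in p..θ, F.toFun t := by
    intro θ hpθ hθy
    rw [← intervalIntegral.integral_add_adjacent_intervals
      (T.intervalIntegrable θL p) (T.intervalIntegrable p θ),
      hTzero p le_rfl hp.le]
    rw [intervalIntegral.integral_of_le hpθ, intervalIntegral.integral_of_le hpθ,
      ← setIntegral_congr_set Ioo_ae_eq_Ioc, ← setIntegral_congr_set Ioo_ae_eq_Ioc]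
    have hcong : ∀ t ∈ Set.Ioo p θ, T.toFun t = F.toFun t := by
      intro t ht
      rw [hT, F.trunc_toFun hp hpy hyH, if_neg (not_lt.2 ht.1.le),
        if_pos (lt_of_lt_of_le ht.2 hθy)]
    rw [setIntegral_congr_fun measurableSet_Ioo hcong, zero_add]
  have hTtop : ∀ θ, y ≤ θ → (∫ t in θL..θ, T.toFun t)
      = (∫ t in p..y, F.toFun t) + (θ - y) := by
    intro θ hyθ
    rw [← intervalIntegral.integral_add_adjacent_intervals
      (T.intervalIntegrable θL y) (T.intervalIntegrable y θ), hTmid y hpy.le le_rfl]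
    congr 1
    rw [intervalIntegral.integral_of_le hyθ, ← setIntegral_congr_set Ioo_ae_eq_Ioc]
    have hcong : ∀ t ∈ Set.Ioo y θ, T.toFun t = (1:ℝ) := by
      intro t ht
      rw [hT, F.trunc_toFun hp hpy hyH, if_neg (not_lt.2 (le_trans hpy.le ht.1.le)),
        if_neg (not_lt.2 ht.1.le)]
    rw [setIntegral_congr_fun measurableSet_Ioo hcong, setIntegral_const, Real.volume_real_Ioo_of_le hyθ,
      smul_eq_mul, mul_one]
  constructor
  · intro θ hθ
    rw [hIF θ]
    have h0 : 0 ≤ IFun F₀ F θ := hsig.1 θ hθ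
    rcases le_or_gt θ p with hcase | hcase
    · rw [hTzero θ hcase hθ.1, sub_zero]
      have : 0 ≤ ∫ t in θL..θ, F.toFun t :=
        intervalIntegral.integral_nonneg hθ.1 (fun t _ => F.toFun_nonneg t)
      linarith
    rcases le_or_gt θ y with hcase2 | hcase2
    · rw [hTmid θ hcase.le hcase2]
      have hsplit : (∫ t in θL..θ, F.toFun t)
          = (∫ t in θL..p, F.toFun t) + ∫ t in p..θ, F.toFun t :=
        (intervalIntegral.integral_add_adjacent_intervals
          (F.intervalIntegrable θL p) (F.intervalIntegrable p θ)).symm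
      have : 0 ≤ ∫ t in θL..p, F.toFun t :=
        intervalIntegral.integral_nonneg hp.le (fun t _ => F.toFun_nonneg t)
      linarith
    · rw [hTtop θ hcase2.le]
      have hsplit1 : (∫ t in θL..θ, F.toFun t)
          = (∫ t in θL..p, F.toFun t) + (∫ t in p..y, F.toFun t) + ∫ t in y..θ, F.toFun t := by
        rw [intervalIntegral.integral_add_adjacent_intervals
          (F.intervalIntegrable θL p) (F.intervalIntegrable p y),
          intervalIntegral.integral_add_adjacent_intervals
          (F.intervalIntegrable θL y) (F.intervalIntegrable y θ)]
      have hβ : (∫ t in y..θH, (1 - F.toFun t))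
          = (∫ t in y..θ, (1 - F.toFun t)) + ∫ t in θ..θH, (1 - F.toFun t) :=
        (intervalIntegral.integral_add_adjacent_intervals
          ((intervalIntegrable_const (c := (1:ℝ))).sub (F.intervalIntegrable y θ))
          ((intervalIntegrable_const (c := (1:ℝ))).sub (F.intervalIntegrable θ θH))).symm
      have hβ2 : 0 ≤ ∫ t in θ..θH, (1 - F.toFun t) :=
        intervalIntegral.integral_nonneg hθ.2 (fun t _ => by linarith [F.toFun_le_one t])
      have hy1 : (∫ t in y..θ, (1 - F.toFun t)) = (θ - y) - ∫ t in y..θ, F.toFun t := by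
        rw [intervalIntegral.integral_sub intervalIntegrable_const (F.intervalIntegrable y θ)]
        simp
      linarith
  · rw [hIF θH, hTtop θH hyH, hsig.2]
    have hsplit1 : (∫ t in θL..θH, F.toFun t)
        = (∫ t in θL..p, F.toFun t) + (∫ t in p..y, F.toFun t) + ∫ t in y..θH, F.toFun t := by
      rw [intervalIntegral.integral_add_adjacent_intervals
        (F.intervalIntegrable θL p) (F.intervalIntegrable p y),
        intervalIntegral.integral_add_adjacent_intervals
        (F.intervalIntegrable θL y) (F.intervalIntegrable y θH)]
    have hy1 : (∫ t in y..θH, (1 - F.toFun t)) = (θH - y) - ∫ t in y..θH, F.toFun t := by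
      rw [intervalIntegral.integral_sub intervalIntegrable_const (F.intervalIntegrable y θH)]
      simp
    linarith [hαβ]

/-- The integral of `φ` against the truncated CDF. -/
lemma trunc_integ_diff (hθ : θL < θH) (hp : θL < p) (hpy : p < y) (hyH : y ≤ θH)
    {φ : ℝ → ℝ} (hφ : ContinuousOn φ (Set.Icc θL θH)) :
    (F.trunc p y hp hpy hyH).integ φ
      = F.integ φ + (∫ θ in Set.Iic p, (φ p - φ θ) ∂F.meas)
        + ∫ θ in Set.Ici y, (φ y - φ θ) ∂F.meas := by
  set T := F.trunc p y hp hpy hyH with hT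
  have hintF : Integrable φ F.meas := F.integrable_of_contOn hθ.le hφ
  have hintT : Integrable φ T.meas := T.integrable_of_contOn hθ.le hφ
  have hdisj1 : Disjoint (Set.Iic p) (Set.Ioo p y ∪ Set.Ici y) := by
    rw [Set.disjoint_union_right]
    constructor
    · rw [Set.disjoint_iff]; rintro x ⟨h1, h2, _⟩; exact absurd h1 (not_le.2 h2)
    · rw [Set.disjoint_iff]; rintro x ⟨h1, h2⟩
      exact absurd (le_trans h2 h1) (not_le.2 hpy)
  have hdisj2 : Disjoint (Set.Ioo p y) (Set.Ici y) := by
    rw [Set.disjoint_iff]; rintro x ⟨h1, h2⟩; exact absurd h2 (not_le.2 h1.2)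
  have huniv : Set.univ = Set.Iic p ∪ (Set.Ioo p y ∪ Set.Ici y) := by
    ext x
    simp only [Set.mem_univ, true_iff, Set.mem_union, Set.mem_Iic, Set.mem_Ioo, Set.mem_Ici]
    rcases le_or_gt x p with h | h
    · exact Or.inl h
    · rcases lt_or_ge x y with h2 | h2
      · exact Or.inr (Or.inl ⟨h, h2⟩)
      · exact Or.inr (Or.inr h2)
  have hsplit : ∀ (ν : Measure ℝ), Integrable φ ν → ∫ θ, φ θ ∂ν
      = (∫ θ in Set.Iic p, φ θ ∂ν) + ((∫ θ in Set.Ioo p y, φ θ ∂ν)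
        + ∫ θ in Set.Ici y, φ θ ∂ν) := by
    intro ν hint
    rw [← setIntegral_univ, huniv, setIntegral_union hdisj1
      (measurableSet_Ioo.union measurableSet_Ici) hint.integrableOn hint.integrableOn,
      setIntegral_union hdisj2 measurableSet_Ici hint.integrableOn hint.integrableOn]
  -- pieces for T
  have hT1 : (∫ θ in Set.Iic p, φ θ ∂T.meas) = F.toFun p * φ p := by
    have hsp : Set.Iic p = Set.Iio p ∪ {p} := by
      ext x; simp [le_iff_lt_or_eq]
    rw [hsp, setIntegral_union (by simp) (measurableSet_singleton p)
      hintT.integrableOn hintT.integrableOn,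
      setIntegral_measure_zero _ (F.trunc_meas_Iio_p hp hpy hyH), zero_add,
      integral_singleton, measureReal_def, F.trunc_meas_singleton_p hp hpy hyH,
      ENNReal.toReal_ofReal (F.toFun_nonneg p), smul_eq_mul]
  have hT2 : (∫ θ in Set.Ioo p y, φ θ ∂T.meas) = ∫ θ in Set.Ioo p y, φ θ ∂F.meas := by
    rw [show (∫ θ in Set.Ioo p y, φ θ ∂T.meas)
      = ∫ θ, φ θ ∂(T.meas.restrict (Set.Ioo p y)) from rfl, F.trunc_restrict_Ioo hp hpy hyH]
  have hT3 : (∫ θ in Set.Ici y, φ θ ∂T.meas) = (F.meas (Set.Ici y)).toReal * φ y := by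
    have hsp : Set.Ici y = {y} ∪ Set.Ioi y := by
      ext x
      simp only [Set.mem_union, Set.mem_singleton_iff, Set.mem_Ioi, Set.mem_Ici]
      constructor
      · intro h; rcases eq_or_lt_of_le h with h' | h'
        · exact Or.inl h'.symm
        · exact Or.inr h'
      · rintro (h | h) <;> simp [h, le_of_lt]
    conv_lhs => rw [hsp]
    rw [setIntegral_union (by simp) measurableSet_Ioi
      hintT.integrableOn hintT.integrableOn,
      setIntegral_measure_zero _ (F.trunc_meas_Ioi_y hp hpy hyH), add_zero,
      integral_singleton, measureReal_def, F.trunc_meas_singleton_y hp hpy hyH, smul_eq_mul]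
  -- pieces for F : constants
  have hF1 : (∫ θ in Set.Iic p, (φ p - φ θ) ∂F.meas)
      = F.toFun p * φ p - ∫ θ in Set.Iic p, φ θ ∂F.meas := by
    rw [integral_sub (integrableOn_const (C := φ p) (measure_ne_top _ _)) hintF.integrableOn,
      integral_const, measureReal_def, Measure.restrict_apply_univ, meas_Iic,
      ENNReal.toReal_ofReal (F.toFun_nonneg p), smul_eq_mul]
  have hF2 : (∫ θ in Set.Ici y, (φ y - φ θ) ∂F.meas)
      = (F.meas (Set.Ici y)).toReal * φ y - ∫ θ in Set.Ici y, φ θ ∂F.meas := by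
    rw [integral_sub (integrableOn_const (C := φ y) (measure_ne_top _ _)) hintF.integrableOn,
      integral_const, measureReal_def, Measure.restrict_apply_univ, smul_eq_mul]
  rw [integ, integ, hsplit T.meas hintT, hsplit F.meas hintF, hT1, hT2, hT3, hF1, hF2]
  ring

end CDF

section Dev

open MeasureTheory

variable {θL θH θ₀ qbar u : ℝ} {Q c c' c'' : ℝ → ℝ}

lemma cprime_strictMono (hc : CostAssumptions θL θH θ₀ c c' c'') :
    StrictMonoOn c' (Set.Ioo θL θH) := by
  apply strictMonoOn_of_deriv_pos (convex_Ioo θL θH)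
  · intro x hx
    exact (hc.hasDeriv2 x hx).continuousAt.continuousWithinAt
  · intro x hx
    rw [interior_Ioo] at hx
    rw [(hc.hasDeriv2 x hx).deriv]
    exact hc.pos2 x hx

lemma c_slope_le (hc : CostAssumptions θL θH θ₀ c c' c'') {θ pt : ℝ}
    (hθmem : θ ∈ Set.Icc θL pt) (hpL : θL < pt) (hpH : pt < θH) :
    c pt - c θ ≤ c' pt * (pt - θ) := by
  rcases eq_or_lt_of_le hθmem.2 with h | h
  · rw [h, sub_self, sub_self, mul_zero]
  · obtain ⟨ξ, hξ, hslope⟩ := exists_hasDerivAt_eq_slope c c' h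
      (hc.cont.mono (Set.Icc_subset_Icc hθmem.1 hpH.le))
      (fun x hx => hc.hasDeriv x ⟨lt_of_le_of_lt hθmem.1 hx.1, lt_trans hx.2 hpH⟩)
    have hle : c' ξ ≤ c' pt :=
      ((cprime_strictMono hc).monotoneOn)
        ⟨lt_of_le_of_lt hθmem.1 hξ.1, lt_trans hξ.2 hpH⟩ ⟨hpL, hpH⟩ hξ.2.le
    have heq : c pt - c θ = c' ξ * (pt - θ) := by
      rw [hslope, div_mul_cancel₀ _ (sub_ne_zero.2 (ne_of_gt h))]
    rw [heq]
    exact mul_le_mul_of_nonneg_right hle (by linarith)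

lemma c_slope_ge (hc : CostAssumptions θL θH θ₀ c c' c'') {θ yt : ℝ}
    (hθmem : θ ∈ Set.Icc yt θH) (hyL : θL < yt) (hyH : yt < θH) :
    c' yt * (θ - yt) ≤ c θ - c yt := by
  rcases eq_or_lt_of_le hθmem.1 with h | h
  · rw [← h, sub_self, sub_self, mul_zero]
  · obtain ⟨ξ, hξ, hslope⟩ := exists_hasDerivAt_eq_slope c c' h
      (hc.cont.mono (Set.Icc_subset_Icc hyL.le hθmem.2))
      (fun x hx => hc.hasDeriv x ⟨lt_trans hyL hx.1, lt_of_lt_of_le hx.2 hθmem.2⟩)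
    have hle : c' yt ≤ c' ξ :=
      ((cprime_strictMono hc).monotoneOn) ⟨hyL, hyH⟩
        ⟨lt_trans hyL hξ.1, lt_of_lt_of_le hξ.2 hθmem.2⟩ hξ.1.le
    have heq : c θ - c yt = c' ξ * (θ - yt) := by
      rw [hslope, div_mul_cancel₀ _ (sub_ne_zero.2 (ne_of_gt h))]
    rw [heq]
    exact mul_le_mul_of_nonneg_right hle (by linarith)

lemma Q_intervalIntegrable (hQ : IsAllocation θL θH qbar Q) {z x : ℝ}
    (hz : z ∈ Set.Icc θL θH) (hx : x ∈ Set.Icc θL θH) :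
    IntervalIntegrable Q MeasureTheory.volume z x :=
  (hQ.1.mono (Set.uIcc_subset_Icc hz hx)).intervalIntegrable

lemma V_diff (hQ : IsAllocation θL θH qbar Q) {z x : ℝ}
    (hz : z ∈ Set.Icc θL θH) (hx : x ∈ Set.Icc θL θH) :
    Vfun θL Q u x - Vfun θL Q u z = ∫ t in z..x, Q t := by
  rw [Vfun, Vfun]
  have := intervalIntegral.integral_interval_sub_left
    (Q_intervalIntegrable hQ (Set.left_mem_Icc.2 (le_trans hz.1 hz.2)) hx)
    (Q_intervalIntegrable hQ (Set.left_mem_Icc.2 (le_trans hz.1 hz.2)) hz)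
  linarith [this]

lemma V_cont (hQ : IsAllocation θL θH qbar Q) (hθ : θL ≤ θH) :
    ContinuousOn (Vfun θL Q u) (Set.Icc θL θH) := by
  have hint : IntegrableOn Q (Set.uIcc θL θH) MeasureTheory.volume := by
    rw [Set.uIcc_of_le hθ, integrableOn_Icc_iff_integrableOn_Ioc]
    exact (Q_intervalIntegrable hQ (Set.left_mem_Icc.2 hθ) (Set.right_mem_Icc.2 hθ)).1
  have := intervalIntegral.continuousOn_primitive_interval hint
  rw [Set.uIcc_of_le hθ] at this
  exact continuousOn_const.add this

lemma phi_cont (hQ : IsAllocation θL θH qbar Q)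
    (hc : CostAssumptions θL θH θ₀ c c' c'') (hθ : θL ≤ θH) :
    ContinuousOn (fun θ => Vfun θL Q u θ - c θ) (Set.Icc θL θH) :=
  (V_cont hQ hθ).sub hc.cont

lemma bottom_pointwise (hQ : IsAllocation θL θH qbar Q)
    (hc : CostAssumptions θL θH θ₀ c c' c'') {θ pt : ℝ}
    (hθmem : θ ∈ Set.Icc θL pt) (hpL : θL < pt) (hpH : pt < θH) :
    (-(c' pt)) * (pt - θ) ≤
      (Vfun θL Q u pt - c pt) - (Vfun θL Q u θ - c θ) := by
  have hθIcc : θ ∈ Set.Icc θL θH := ⟨hθmem.1, le_trans hθmem.2 hpH.le⟩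
  have hptIcc : pt ∈ Set.Icc θL θH := ⟨hpL.le, hpH.le⟩
  have hV : 0 ≤ Vfun θL Q u pt - Vfun θL Q u θ := by
    rw [V_diff hQ hθIcc hptIcc]
    exact intervalIntegral.integral_nonneg hθmem.2
      (fun t ht => (hQ.2 t ⟨le_trans hθmem.1 ht.1, le_trans ht.2 hpH.le⟩).1)
  have hcb := c_slope_le hc hθmem hpL hpH
  nlinarith

lemma top_pointwise (hQ : IsAllocation θL θH qbar Q)
    (hc : CostAssumptions θL θH θ₀ c c' c'') {θ yt : ℝ}
    (hθmem : θ ∈ Set.Icc yt θH) (hyL : θL < yt) (hyH : yt < θH) :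
    (c' yt - qbar) * (θ - yt) ≤
      (Vfun θL Q u yt - c yt) - (Vfun θL Q u θ - c θ) := by
  have hθIcc : θ ∈ Set.Icc θL θH := ⟨le_trans hyL.le hθmem.1, hθmem.2⟩
  have hytIcc : yt ∈ Set.Icc θL θH := ⟨hyL.le, hyH.le⟩
  have hV : Vfun θL Q u θ - Vfun θL Q u yt ≤ qbar * (θ - yt) := by
    rw [V_diff hQ hytIcc hθIcc]
    have h1 : (∫ t in yt..θ, Q t) ≤ ∫ t in yt..θ, qbar :=
      intervalIntegral.integral_mono_on hθmem.1
        (Q_intervalIntegrable hQ hytIcc hθIcc) intervalIntegrable_const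
        (fun t ht => (hQ.2 t ⟨le_trans hyL.le ht.1, le_trans ht.2 hθmem.2⟩).2)
    rw [intervalIntegral.integral_const, smul_eq_mul] at h1
    linarith
  have hcb := c_slope_ge hc hθmem hyL hyH
  nlinarith

end Dev

section DevBound

open MeasureTheory

/-- Key variational inequality: if `(Q, u)` is `F`-IC, then for any admissible
truncation points `p < y` with positive balanced mass, the marginal gain must be nonpositive. -/
lemma dev_bound {θL θH : ℝ} (hθ : θL < θH) (F₀ F : CDF θL θH)
    {c c' c'' : ℝ → ℝ} {θ₀ : ℝ} (hc : CostAssumptions θL θH θ₀ c c' c'')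
    {qbar : ℝ} {Q : ℝ → ℝ} (hQ : IsAllocation θL θH qbar Q) {u : ℝ}
    (hIC : IsIC F₀ c Q u F) {p y : ℝ}
    (hpL : θL < p) (hpy : p < y) (hyH : y < θH)
    (hα : 0 < ∫ t in θL..p, F.toFun t)
    (hαβ : (∫ t in θL..p, F.toFun t) = ∫ t in y..θH, (1 - F.toFun t)) :
    -(c' p) + c' y - qbar ≤ 0 := by
  set φ : ℝ → ℝ := fun θ => Vfun θL Q u θ - c θ with hφdef
  have hφ : ContinuousOn φ (Set.Icc θL θH) := phi_cont hQ hc hθ.le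
  set T := F.trunc p y hpL hpy hyH.le with hT
  have hsigT : IsSignal F₀ T := F.trunc_isSignal F₀ hIC.1 hpL hpy hyH.le hαβ
  have hle : T.integ φ ≤ F.integ φ := hIC.2 T hsigT
  have hdiff := F.trunc_integ_diff hθ hpL hpy hyH.le hφ
  set μ := F.meas with hμ
  -- integrability facts
  have hφint : Integrable φ μ := F.integrable_of_contOn hθ.le hφ
  have haeL : ∀ᵐ θ ∂μ, θL ≤ θ := by
    rw [ae_iff]
    have hset : {a : ℝ | ¬ θL ≤ a} = Set.Iio θL := by ext x; simp [not_le]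
    rw [hset]
    exact F.meas_Iio_bot
  have haeH : ∀ᵐ θ ∂μ, θ ≤ θH := by
    rw [ae_iff]
    have hset : {a : ℝ | ¬ a ≤ θH} = Set.Ioi θH := by ext x; simp [not_le]
    rw [hset]
    exact F.meas_Ioi_top
  -- bottom bound
  have hbot : (-(c' p)) * (∫ t in θL..p, F.toFun t)
      ≤ ∫ θ in Set.Iic p, (φ p - φ θ) ∂μ := by
    have hmono : ∫ θ in Set.Iic p, (-(c' p)) * (p - θ) ∂μ
        ≤ ∫ θ in Set.Iic p, (φ p - φ θ) ∂μ := by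
      refine setIntegral_mono_ae_restrict ?_ ?_ ?_
      · exact (F.integrable_of_contOn hθ.le
          ((continuousOn_const).mul (continuousOn_const.sub continuousOn_id))).integrableOn
      · exact ((F.integrable_of_contOn hθ.le
          (continuousOn_const.sub hφ))).integrableOn
      · rw [Filter.EventuallyLE, ae_restrict_iff' measurableSet_Iic]
        filter_upwards [haeL] with θ hθL hmem
        exact bottom_pointwise hQ hc ⟨hθL, hmem⟩ hpL (lt_of_lt_of_le hpy hyH.le)
    have heq : ∫ θ in Set.Iic p, (-(c' p)) * (p - θ) ∂μ
        = (-(c' p)) * ∫ θ in Set.Iic p, (p - θ) ∂μ := integral_const_mul _ _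
    rw [heq, F.layercake_Iic hθ.le hpL.le] at hmono
    exact hmono
  -- top bound
  have htop : (c' y - qbar) * (∫ t in θL..p, F.toFun t)
      ≤ ∫ θ in Set.Ici y, (φ y - φ θ) ∂μ := by
    have hmono : ∫ θ in Set.Ici y, (c' y - qbar) * (θ - y) ∂μ
        ≤ ∫ θ in Set.Ici y, (φ y - φ θ) ∂μ := by
      refine setIntegral_mono_ae_restrict ?_ ?_ ?_
      · exact (F.integrable_of_contOn hθ.le
          ((continuousOn_const).mul (continuousOn_id.sub continuousOn_const))).integrableOn
      · exact ((F.integrable_of_contOn hθ.le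
          (continuousOn_const.sub hφ))).integrableOn
      · rw [Filter.EventuallyLE, ae_restrict_iff' measurableSet_Ici]
        filter_upwards [haeH] with θ hθH hmem
        exact top_pointwise hQ hc ⟨hmem, hθH⟩ (lt_trans hpL hpy) hyH
    have heq : ∫ θ in Set.Ici y, (c' y - qbar) * (θ - y) ∂μ
        = (c' y - qbar) * ∫ θ in Set.Ici y, (θ - y) ∂μ := integral_const_mul _ _
    rw [heq, F.layercake_Ici hyH.le, ← hαβ] at hmono
    exact hmono
  -- combine
  have hsum : ((-(c' p)) + (c' y - qbar)) * (∫ t in θL..p, F.toFun t) ≤ 0 := by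
    have : T.integ φ - F.integ φ = (∫ θ in Set.Iic p, (φ p - φ θ) ∂μ)
        + ∫ θ in Set.Ici y, (φ y - φ θ) ∂μ := by
      rw [hdiff]; ring
    nlinarith [hbot, htop]
  by_contra hcon
  push_neg at hcon
  have := mul_pos (by linarith : (0:ℝ) < (-(c' p)) + (c' y - qbar)) hα
  linarith

end DevBound

namespace CDF

open MeasureTheory

variable {θL θH : ℝ}

lemma integral_toFun_pos (F : CDF θL θH) {a b : ℝ} (hab : a < b)
    (hmid : 0 < F.toFun ((a + b) / 2)) : 0 < ∫ t in a..b, F.toFun t := by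
  set m := (a + b) / 2 with hm
  have hm1 : a ≤ m := by rw [hm]; linarith
  have hm2 : m ≤ b := by rw [hm]; linarith
  rw [← intervalIntegral.integral_add_adjacent_intervals
    (F.intervalIntegrable a m) (F.intervalIntegrable m b)]
  have h1 : 0 ≤ ∫ t in a..m, F.toFun t :=
    intervalIntegral.integral_nonneg hm1 (fun t _ => F.toFun_nonneg t)
  have h2 : (∫ t in m..b, F.toFun m) ≤ ∫ t in m..b, F.toFun t :=
    intervalIntegral.integral_mono_on hm2 intervalIntegrable_const
      (F.intervalIntegrable m b) (fun t ht => F.mono ht.1)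
  rw [intervalIntegral.integral_const, smul_eq_mul] at h2
  have hbm : 0 < b - m := by rw [hm]; linarith
  nlinarith

lemma integral_one_sub_pos (F : CDF θL θH) {a b : ℝ} (hab : a < b)
    (hmid : F.toFun ((a + b) / 2) < 1) : 0 < ∫ t in a..b, (1 - F.toFun t) := by
  set m := (a + b) / 2 with hm
  have hm1 : a ≤ m := by rw [hm]; linarith
  have hm2 : m ≤ b := by rw [hm]; linarith
  rw [← intervalIntegral.integral_add_adjacent_intervals
    ((intervalIntegrable_const (c := (1:ℝ))).sub (F.intervalIntegrable a m))
    ((intervalIntegrable_const (c := (1:ℝ))).sub (F.intervalIntegrable m b))]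
  have h1 : (∫ t in a..m, (1 - F.toFun m)) ≤ ∫ t in a..m, (1 - F.toFun t) :=
    intervalIntegral.integral_mono_on hm1 intervalIntegrable_const
      ((intervalIntegrable_const (c := (1:ℝ))).sub (F.intervalIntegrable a m))
      (fun t ht => by have := F.mono ht.2; linarith)
  have h2 : 0 ≤ ∫ t in m..b, (1 - F.toFun t) :=
    intervalIntegral.integral_nonneg hm2 (fun t _ => by linarith [F.toFun_le_one t])
  rw [intervalIntegral.integral_const, smul_eq_mul] at h1
  have hma : 0 < m - a := by rw [hm]; linarith
  nlinarith

lemma integral_toFun_le (F : CDF θL θH) {a b : ℝ} (hab : a ≤ b) :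
    (∫ t in a..b, F.toFun t) ≤ b - a := by
  have h2 : (∫ t in a..b, F.toFun t) ≤ ∫ t in a..b, (1:ℝ) :=
    intervalIntegral.integral_mono_on hab (F.intervalIntegrable a b)
      intervalIntegrable_const (fun t _ => F.toFun_le_one t)
  rw [intervalIntegral.integral_const, smul_eq_mul, mul_one] at h2
  exact h2

lemma integral_one_sub_le (F : CDF θL θH) {a b : ℝ} (hab : a ≤ b) :
    (∫ t in a..b, (1 - F.toFun t)) ≤ b - a := by
  have h2 : (∫ t in a..b, (1 - F.toFun t)) ≤ ∫ t in a..b, (1:ℝ) :=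
    intervalIntegral.integral_mono_on hab
      ((intervalIntegrable_const (c := (1:ℝ))).sub (F.intervalIntegrable a b))
      intervalIntegrable_const (fun t _ => by linarith [F.toFun_nonneg t])
  rw [intervalIntegral.integral_const, smul_eq_mul, mul_one] at h2
  exact h2

lemma integral_one_sub_nonneg (F : CDF θL θH) {a b : ℝ} (hab : a ≤ b) :
    0 ≤ ∫ t in a..b, (1 - F.toFun t) :=
  intervalIntegral.integral_nonneg hab (fun t _ => by linarith [F.toFun_le_one t])

lemma alpha_contOn (F : CDF θL θH) (hθ : θL ≤ θH) :
    ContinuousOn (fun x => ∫ t in θL..x, F.toFun t) (Set.Icc θL θH) := by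
  have h := intervalIntegral.continuousOn_primitive_interval
    (f := F.toFun) (a := θL) (b := θH) (μ := volume) ?_
  · rwa [Set.uIcc_of_le hθ] at h
  · rw [Set.uIcc_of_le hθ, integrableOn_Icc_iff_integrableOn_Ioc]
    exact (F.intervalIntegrable θL θH).1

lemma beta_contOn (F : CDF θL θH) (hθ : θL ≤ θH) :
    ContinuousOn (fun x => ∫ t in x..θH, (1 - F.toFun t)) (Set.Icc θL θH) := by
  have hint : ∀ a b : ℝ, IntervalIntegrable (fun t => 1 - F.toFun t) volume a b :=
    fun a b => (intervalIntegrable_const (c := (1:ℝ))).sub (F.intervalIntegrable a b)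
  have h1 : ∀ x ∈ Set.Icc θL θH, (∫ t in x..θH, (1 - F.toFun t))
      = (∫ t in θL..θH, (1 - F.toFun t)) - ∫ t in θL..x, (1 - F.toFun t) := by
    intro x hx
    rw [← intervalIntegral.integral_add_adjacent_intervals (hint θL x) (hint x θH)]
    ring
  refine ContinuousOn.congr ?_ h1
  refine continuousOn_const.sub ?_
  have h := intervalIntegral.continuousOn_primitive_interval
    (f := fun t => 1 - F.toFun t) (a := θL) (b := θH) (μ := volume) ?_
  · rwa [Set.uIcc_of_le hθ] at h
  · rw [Set.uIcc_of_le hθ, integrableOn_Icc_iff_integrableOn_Ioc]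
    exact (hint θL θH).1

lemma alpha_sub_beta (F : CDF θL θH) (x : ℝ) :
    (∫ t in θL..x, F.toFun t) - (∫ t in x..θH, (1 - F.toFun t))
      = x - (θH - ∫ t in θL..θH, F.toFun t) := by
  have h2 : ∫ t in x..θH, (1 - F.toFun t) = (θH - x) - ∫ t in x..θH, F.toFun t := by
    rw [intervalIntegral.integral_sub intervalIntegrable_const (F.intervalIntegrable x θH)]
    simp
  have h3 : (∫ t in θL..x, F.toFun t) + ∫ t in x..θH, F.toFun t
      = ∫ t in θL..θH, F.toFun t :=
    intervalIntegral.integral_add_adjacent_intervals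
      (F.intervalIntegrable θL x) (F.intervalIntegrable x θH)
  linarith

/-- The total integral of a signal equals that of the prior. -/
lemma signal_total {F₀ F : CDF θL θH} (hsig : IsSignal F₀ F) :
    (∫ t in θL..θH, F.toFun t) = ∫ t in θL..θH, F₀.toFun t := by
  have h := hsig.2
  rw [IFun, intervalIntegral.integral_sub (F₀.intervalIntegrable θL θH)
    (F.intervalIntegrable θL θH)] at h
  linarith

/-- Lipschitz property of `IFun`. -/
lemma IFun_lipschitz (F₀ F : CDF θL θH) (a b : ℝ) :
    |IFun F₀ F a - IFun F₀ F b| ≤ |a - b| := by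
  have hint : ∀ x y : ℝ, IntervalIntegrable (fun t => F₀.toFun t - F.toFun t) volume x y :=
    fun x y => (F₀.intervalIntegrable x y).sub (F.intervalIntegrable x y)
  have hsplit : IFun F₀ F a - IFun F₀ F b = ∫ t in b..a, (F₀.toFun t - F.toFun t) := by
    rw [IFun, IFun]
    have := intervalIntegral.integral_add_adjacent_intervals (hint θL b) (hint b a)
    linarith
  rw [hsplit]
  have := intervalIntegral.norm_integral_le_of_norm_le_const (C := 1)
    (f := fun t => F₀.toFun t - F.toFun t) (a := b) (b := a) ?_
  · rw [Real.norm_eq_abs] at this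
    calc |∫ t in b..a, (F₀.toFun t - F.toFun t)| ≤ 1 * |a - b| := this
    _ = |a - b| := one_mul _
  · intro x _
    rw [Real.norm_eq_abs, abs_le]
    refine ⟨?_, ?_⟩ <;>
      [linarith [F₀.toFun_nonneg x, F.toFun_le_one x];
       linarith [F₀.toFun_le_one x, F.toFun_nonneg x]]

end CDF

section Strict

open MeasureTheory Filter Topology

variable {θL θH θ₀ qbar u : ℝ} {Q c c' c'' : ℝ → ℝ}

lemma prior_pos {F₀ : CDF θL θH} (hF₀ : IsPrior F₀) {t : ℝ} (ht : θL < t) :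
    0 < F₀.toFun t := by
  have h := hF₀.1 (t - θL) (by linarith)
  rw [F₀.eq_zero (θL - (t - θL)) (by linarith)] at h
  have heq : θL + (t - θL) = t := by ring
  rw [heq] at h
  linarith

lemma prior_lt_one {F₀ : CDF θL θH} (hF₀ : IsPrior F₀) {t : ℝ} (ht : t < θH) :
    F₀.toFun t < 1 := by
  have h := hF₀.2 (θH - t) (by linarith)
  rw [F₀.eq_one (θH + (θH - t)) (by linarith)] at h
  have heq : θH - (θH - t) = t := by ring
  rw [heq] at h
  linarith

lemma bottom_strict (hθ : θL < θH) (F₀ F : CDF θL θH) (hF₀ : IsPrior F₀)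
    (hc : CostAssumptions θL θH θ₀ c c' c'') (hqbar : 0 < qbar)
    (hQ : IsAllocation θL θH qbar Q) (hIC : IsIC F₀ c Q u F) :
    θL < thetaLF F := by
  by_contra hcon
  push_neg at hcon
  have hLF : thetaLF F = θL := le_antisymm hcon (F.thetaLF_mem_Icc hθ.le).1
  have Fpos : ∀ t, θL < t → 0 < F.toFun t := fun t ht =>
    F.toFun_pos_of_thetaLF_lt (by rw [hLF]; exact ht)
  set θbar : ℝ := θH - ∫ t in θL..θH, F₀.toFun t with hθbar
  have hbar1 : θL < θbar := by
    have hpos := F₀.integral_one_sub_pos hθ (prior_lt_one hF₀ (by linarith : (θL + θH)/2 < θH))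
    have hsub : (∫ t in θL..θH, (1 - F₀.toFun t)) = (θH - θL) - ∫ t in θL..θH, F₀.toFun t := by
      rw [intervalIntegral.integral_sub intervalIntegrable_const
        (F₀.intervalIntegrable θL θH)]
      simp
    rw [hθbar]; linarith
  have hbar2 : θbar < θH := by
    have hpos := F₀.integral_toFun_pos hθ (prior_pos hF₀ (by linarith : θL < (θL + θH)/2))
    rw [hθbar]; linarith
  have htot : (∫ t in θL..θH, F.toFun t) = ∫ t in θL..θH, F₀.toFun t := CDF.signal_total hIC.1
  set r : ℝ := (θL + θbar)/2 with hrdef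
  have hr : θL < r := by rw [hrdef]; linarith
  have hrbar : r < θbar := by rw [hrdef]; linarith
  set C : ℝ := c' r with hC
  -- choose p near θL
  have hev := (hc.slopeBot.eventually (eventually_lt_atBot (C - qbar - 1))).and
    (Ioo_mem_nhdsGT_of_mem (Set.left_mem_Ico.2 hr))
  obtain ⟨p, hp1, hp2⟩ := hev.exists
  have hpL : θL < p := hp2.1
  have hpr : p < r := hp2.2
  have hpH : p < θH := by linarith
  have hα : 0 < ∫ t in θL..p, F.toFun t :=
    F.integral_toFun_pos hpL (Fpos _ (by linarith))
  -- IVT for y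
  set g : ℝ → ℝ := fun x => ∫ t in x..θH, (1 - F.toFun t) with hg
  have hgcont : ContinuousOn g (Set.Icc p θH) :=
    (F.beta_contOn hθ.le).mono (Set.Icc_subset_Icc hpL.le le_rfl)
  have hgθH : g θH = 0 := by rw [hg]; exact intervalIntegral.integral_same
  have hdiffp := F.alpha_sub_beta p
  rw [htot] at hdiffp
  have hgp : (∫ t in θL..p, F.toFun t) < g p := by rw [hg]; dsimp only; linarith
  have hsub := intermediate_value_Icc' hpH.le hgcont
  have hmem : (∫ t in θL..p, F.toFun t) ∈ Set.Icc (g θH) (g p) := ⟨by linarith, hgp.le⟩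
  obtain ⟨y, hymem, hgy⟩ := hsub hmem
  have hyH : y < θH := by
    rcases eq_or_lt_of_le hymem.2 with h | h
    · rw [h, hgθH] at hgy; linarith
    · exact h
  have hpy : p < y := by
    rcases eq_or_lt_of_le hymem.1 with h | h
    · rw [← h] at hgy; linarith
    · exact h
  have hdiffy := F.alpha_sub_beta y
  rw [htot] at hdiffy
  have hαFy : 0 ≤ ∫ t in θL..y, F.toFun t :=
    intervalIntegral.integral_nonneg (by linarith) (fun t _ => F.toFun_nonneg t)
  have hαle : (∫ t in θL..p, F.toFun t) ≤ p - θL := F.integral_toFun_le hpL.le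
  have hyr : r ≤ y := by
    have : g y = ∫ t in y..θH, (1 - F.toFun t) := rfl
    rw [hrdef]
    linarith [hgy, hdiffy]
  have hcy : C ≤ c' y :=
    ((cprime_strictMono hc).monotoneOn) ⟨hr, lt_trans hrbar hbar2⟩
      ⟨lt_of_lt_of_le hr hyr, hyH⟩ hyr
  have hdev := dev_bound hθ F₀ F hc hQ hIC hpL hpy hyH hα hgy.symm
  linarith

lemma top_strict (hθ : θL < θH) (F₀ F : CDF θL θH) (hF₀ : IsPrior F₀)
    (hc : CostAssumptions θL θH θ₀ c c' c'') (hqbar : 0 < qbar)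
    (hQ : IsAllocation θL θH qbar Q) (hIC : IsIC F₀ c Q u F) :
    thetaHF F < θH := by
  by_contra hcon
  push_neg at hcon
  have hHF : thetaHF F = θH := le_antisymm (F.thetaHF_mem_Icc hθ.le).2 hcon
  have Flt1 : ∀ t, t < θH → F.toFun t < 1 := fun t ht =>
    F.toFun_lt_one_of_lt_thetaHF (by rw [hHF]; exact ht)
  set θbar : ℝ := θH - ∫ t in θL..θH, F₀.toFun t with hθbar
  have hbar1 : θL < θbar := by
    have hpos := F₀.integral_one_sub_pos hθ (prior_lt_one hF₀ (by linarith : (θL + θH)/2 < θH))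
    have hsub : (∫ t in θL..θH, (1 - F₀.toFun t)) = (θH - θL) - ∫ t in θL..θH, F₀.toFun t := by
      rw [intervalIntegral.integral_sub intervalIntegrable_const
        (F₀.intervalIntegrable θL θH)]
      simp
    rw [hθbar]; linarith
  have hbar2 : θbar < θH := by
    have hpos := F₀.integral_toFun_pos hθ (prior_pos hF₀ (by linarith : θL < (θL + θH)/2))
    rw [hθbar]; linarith
  have htot : (∫ t in θL..θH, F.toFun t) = ∫ t in θL..θH, F₀.toFun t := CDF.signal_total hIC.1
  set r : ℝ := (θbar + θH)/2 with hrdef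
  have hr : θbar < r := by rw [hrdef]; linarith
  have hrH : r < θH := by rw [hrdef]; linarith
  set C : ℝ := c' r with hC
  have hev := (hc.slopeTop.eventually (eventually_gt_atTop (C + qbar + 1))).and
    (Ioo_mem_nhdsLT_of_mem (Set.right_mem_Ioc.2 hrH))
  obtain ⟨p, hp1, hp2⟩ := hev.exists
  have hpr : r < p := hp2.1
  have hpH : p < θH := hp2.2
  have hpL : θL < p := by linarith
  have hβ : 0 < ∫ t in p..θH, (1 - F.toFun t) :=
    F.integral_one_sub_pos hpH (Flt1 _ (by linarith))
  -- IVT for y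
  set a : ℝ → ℝ := fun x => ∫ t in θL..x, F.toFun t with ha
  have hacont : ContinuousOn a (Set.Icc θL p) :=
    (F.alpha_contOn hθ.le).mono (Set.Icc_subset_Icc le_rfl hpH.le)
  have haθL : a θL = 0 := by rw [ha]; exact intervalIntegral.integral_same
  have hdiffp := F.alpha_sub_beta p
  rw [htot] at hdiffp
  have hap : (∫ t in p..θH, (1 - F.toFun t)) < a p := by rw [ha]; dsimp only; linarith
  have hsub := intermediate_value_Icc hpL.le hacont
  have hmem : (∫ t in p..θH, (1 - F.toFun t)) ∈ Set.Icc (a θL) (a p) :=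
    ⟨by linarith, hap.le⟩
  obtain ⟨y, hymem, hay⟩ := hsub hmem
  have hyL : θL < y := by
    rcases eq_or_lt_of_le hymem.1 with h | h
    · rw [← h, haθL] at hay; linarith
    · exact h
  have hyp : y < p := by
    rcases eq_or_lt_of_le hymem.2 with h | h
    · rw [h] at hay; linarith
    · exact h
  have hdiffy := F.alpha_sub_beta y
  rw [htot] at hdiffy
  have hβy : 0 ≤ ∫ t in y..θH, (1 - F.toFun t) :=
    F.integral_one_sub_nonneg (by linarith)
  have hβle : (∫ t in p..θH, (1 - F.toFun t)) ≤ θH - p := F.integral_one_sub_le hpH.le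
  have hyr : y ≤ r := by
    have h1 : a y = ∫ t in θL..y, F.toFun t := rfl
    rw [hrdef]
    linarith [hay, hdiffy]
  have hcy : c' y ≤ C :=
    ((cprime_strictMono hc).monotoneOn) ⟨hyL, by linarith⟩ ⟨by linarith, hrH⟩ hyr
  have hα : 0 < ∫ t in θL..y, F.toFun t := by rw [show (∫ t in θL..y, F.toFun t) = a y from rfl, hay]; exact hβ
  have hdev := dev_bound hθ F₀ F hc hQ hIC hyL hyp hpH hα hay
  linarith

end Strict


theorem statement5 {θL θH : ℝ} (hθL : 0 ≤ θL) (hθ : θL < θH)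
    (F₀ : CDF θL θH) (hF₀ : IsPrior F₀)
    (c c' c'' : ℝ → ℝ) (hc : CostAssumptions θL θH F₀.mean c c' c'')
    (qbar : ℝ) (hqbar : 0 < qbar)
    (Q : ℝ → ℝ) (hQ : IsAllocation θL θH qbar Q)
    (u : ℝ) (hu : 0 ≤ u)
    (F : CDF θL θH) (hIC : IsIC F₀ c Q u F) :
    θL < thetaLF F ∧ thetaHF F < θH ∧
    ∃ ε > 0, ∀ θ ∈ Set.Icc θL θH,
      (|θ - thetaLF F| < ε ∨ |θ - thetaHF F| < ε) → 0 < IFun F₀ F θ := by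
  have h1 := bottom_strict hθ F₀ F hF₀ hc hqbar hQ hIC
  have h2 := top_strict hθ F₀ F hF₀ hc hqbar hQ hIC
  refine ⟨h1, h2, ?_⟩
  set xL := thetaLF F with hxL
  set xH := thetaHF F with hxH
  -- positivity at the support endpoints
  have hIL : 0 < IFun F₀ F xL := by
    have hzero : (∫ t in θL..xL, F.toFun t) = 0 := by
      rw [intervalIntegral.integral_of_le h1.le, ← setIntegral_congr_set Ioo_ae_eq_Ioc,
        setIntegral_congr_fun measurableSet_Ioo
          (fun t ht => F.toFun_eq_zero_of_lt_thetaLF ht.2)]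
      simp
    have hF₀pos : 0 < ∫ t in θL..xL, F₀.toFun t :=
      F₀.integral_toFun_pos h1 (prior_pos hF₀ (by linarith))
    rw [IFun, intervalIntegral.integral_sub (F₀.intervalIntegrable θL xL)
      (F.intervalIntegrable θL xL), hzero]
    linarith
  have hIH : 0 < IFun F₀ F xH := by
    have hxHmem := F.thetaHF_mem_Icc hθ.le
    have hadj : IFun F₀ F θH
        = IFun F₀ F xH + ∫ t in xH..θH, (F₀.toFun t - F.toFun t) := by
      rw [IFun, IFun]
      exact (intervalIntegral.integral_add_adjacent_intervals
        ((F₀.intervalIntegrable θL xH).sub (F.intervalIntegrable θL xH))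
        ((F₀.intervalIntegrable xH θH).sub (F.intervalIntegrable xH θH))).symm
    have hIθH : IFun F₀ F θH = 0 := hIC.1.2
    have hcong : (∫ t in xH..θH, (F₀.toFun t - F.toFun t))
        = ∫ t in xH..θH, (F₀.toFun t - 1) := by
      rw [intervalIntegral.integral_of_le h2.le, intervalIntegral.integral_of_le h2.le,
        ← setIntegral_congr_set Ioo_ae_eq_Ioc, ← setIntegral_congr_set Ioo_ae_eq_Ioc]
      exact setIntegral_congr_fun measurableSet_Ioo
        (fun t ht => by rw [F.toFun_eq_one_of_thetaHF_lt ht.1])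
    have hval : (∫ t in xH..θH, (F₀.toFun t - 1))
        = -(∫ t in xH..θH, (1 - F₀.toFun t)) := by
      rw [← intervalIntegral.integral_neg]
      congr 1
      ext t
      ring
    have hpos : 0 < ∫ t in xH..θH, (1 - F₀.toFun t) :=
      F₀.integral_one_sub_pos h2 (prior_lt_one hF₀ (by linarith [hxHmem.1]))
    rw [hadj, hcong, hval] at hIθH
    linarith
  -- Lipschitz argument
  refine ⟨min (IFun F₀ F xL) (IFun F₀ F xH), lt_min hIL hIH, fun θ hθmem hnear => ?_⟩
  rcases hnear with hn | hn
  · have hlip := CDF.IFun_lipschitz F₀ F xL θ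
    have habs : |xL - θ| = |θ - xL| := abs_sub_comm _ _
    have hle : IFun F₀ F xL - IFun F₀ F θ ≤ |IFun F₀ F xL - IFun F₀ F θ| := le_abs_self _
    have hmin : min (IFun F₀ F xL) (IFun F₀ F xH) ≤ IFun F₀ F xL := min_le_left _ _
    linarith
  · have hlip := CDF.IFun_lipschitz F₀ F xH θ
    have habs : |xH - θ| = |θ - xH| := abs_sub_comm _ _
    have hle : IFun F₀ F xH - IFun F₀ F θ ≤ |IFun F₀ F xH - IFun F₀ F θ| := le_abs_self _
    have hmin : min (IFun F₀ F xL) (IFun F₀ F xH) ≤ IFun F₀ F xH := min_le_right _ _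
    linarith
end

section
/- Let (Q*, F*) be monopolist-optimal, and let Q be an allocation that is F*-IC. Then ∫ [(θ − κ'(Q*(θ)))·(Q(θ) − Q*(θ)) − (V_Q(θ) − V_{Q*}(θ))] dF*(θ) ≤ 0. -/
open MeasureTheory Set Filter

section Aux

open MeasureTheory Set Filter

/-- Tangent-line inequality for a convex function with a derivative within the set. -/
lemma aux_tangent {s : Set ℝ} {f f' : ℝ → ℝ} (hconv : ConvexOn ℝ s f)
    (hd : ∀ q ∈ s, HasDerivWithinAt f (f' q) s q) :
    ∀ x ∈ s, ∀ y ∈ s, f x + f' x * (y - x) ≤ f y := by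
  intro x hx y hy
  rcases lt_trichotomy x y with h | h | h
  · have h1 := hconv.le_slope_of_hasDerivWithinAt hx hy h (hd x hx)
    rw [slope_def_field] at h1
    have hxy : (0:ℝ) < y - x := by linarith
    rw [le_div_iff₀ hxy] at h1
    linarith
  · subst h; simp
  · have h1 := hconv.slope_le_of_hasDerivWithinAt hy hx h (hd x hx)
    rw [slope_def_field] at h1
    have hxy : (0:ℝ) < x - y := by linarith
    rw [div_le_iff₀ hxy] at h1
    nlinarith

namespace CDF

variable {θL θH : ℝ}

lemma aux_tendsto_atBot (F : CDF θL θH) : Tendsto F.stieltjes atBot (nhds 0) := by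
  refine Tendsto.congr' ?_ tendsto_const_nhds
  filter_upwards [eventually_lt_atBot θL] with x hx
  exact (F.eq_zero x hx).symm

lemma aux_tendsto_atTop (F : CDF θL θH) : Tendsto F.stieltjes atTop (nhds 1) := by
  refine Tendsto.congr' ?_ tendsto_const_nhds
  filter_upwards [eventually_ge_atTop θH] with x hx
  exact (F.eq_one x hx).symm

lemma aux_isProb (F : CDF θL θH) : IsProbabilityMeasure F.meas :=
  F.stieltjes.isProbabilityMeasure F.aux_tendsto_atBot F.aux_tendsto_atTop

lemma aux_ae_mem (hθ : θL ≤ θH) (F : CDF θL θH) :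
    ∀ᵐ θ ∂F.meas, θ ∈ Set.Icc θL θH := by
  have hIio : F.meas (Set.Iio θL) = 0 := by
    have hsub : Set.Iio θL ⊆ ⋃ n : ℕ, Set.Iic (θL - 1 / (n + 1)) := by
      intro x hx
      obtain ⟨n, hn⟩ := exists_nat_one_div_lt (K := ℝ) (sub_pos.2 hx)
      exact Set.mem_iUnion.2 ⟨n, by simp only [Set.mem_Iic]; linarith⟩
    refine measure_mono_null hsub ?_
    refine le_antisymm (le_trans (measure_iUnion_le _) ?_) zero_le
    have hzero : ∀ n : ℕ, F.meas (Set.Iic (θL - 1 / (n + 1))) = 0 := by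
      intro n
      have hpos : (0:ℝ) < 1 / (n + 1) := by positivity
      have hlt : θL - 1 / (n + 1) < θL := by linarith
      show F.stieltjes.measure _ = 0
      have : F.stieltjes (θL - 1 / (n + 1)) = 0 := F.eq_zero _ hlt
      rw [StieltjesFunction.measure_Iic _ F.aux_tendsto_atBot, this]
      simp
    simp only [hzero, tsum_zero, le_refl]
  have hIoi : F.meas (Set.Ioi θH) = 0 := by
    have hsub : Set.Ioi θH ⊆ ⋃ n : ℕ, Set.Ioc θH (θH + n) := by
      intro x hx
      obtain ⟨n, hn⟩ := exists_nat_gt (x - θH)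
      exact Set.mem_iUnion.2 ⟨n, hx, by linarith⟩
    refine measure_mono_null hsub ?_
    refine le_antisymm (le_trans (measure_iUnion_le _) ?_) zero_le
    have hzero : ∀ n : ℕ, F.meas (Set.Ioc θH (θH + n)) = 0 := by
      intro n
      show F.stieltjes.measure _ = 0
      rw [StieltjesFunction.measure_Ioc]
      have h1 : F.stieltjes (θH + n) = 1 := F.eq_one _ (le_add_of_nonneg_right (Nat.cast_nonneg n))
      have h2 : F.stieltjes θH = 1 := F.eq_one _ le_rfl
      rw [h1, h2]
      simp
    simp only [hzero, tsum_zero, le_refl]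
  rw [MeasureTheory.ae_iff]
  have hset : {x | ¬ x ∈ Set.Icc θL θH} = Set.Iio θL ∪ Set.Ioi θH := by
    ext x
    simp only [Set.mem_setOf_eq, Set.mem_Icc, Set.mem_union, Set.mem_Iio, Set.mem_Ioi,
      not_and_or, not_le]
  rw [hset]
  exact measure_union_null hIio hIoi

end CDF

/-- Bounded measurable functions are integrable w.r.t. a finite measure. -/
lemma aux_integrable {μ : Measure ℝ} [IsFiniteMeasure μ] {g : ℝ → ℝ} (hg : Measurable g)
    {M : ℝ} (h : ∀ t, |g t| ≤ M) : Integrable g μ :=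
  (integrable_const M).mono' hg.aestronglyMeasurable
    (Filter.Eventually.of_forall (by simpa [Real.norm_eq_abs] using h))

/-- Primitive of a nonnegative monotone function is monotone. -/
lemma aux_primitive_mono {g : ℝ → ℝ} (hg : Monotone g) (hpos : ∀ t, 0 ≤ g t) (a : ℝ) :
    Monotone fun t => ∫ s in a..t, g s := by
  intro x y hxy
  have h1 : (∫ s in a..x, g s) + ∫ s in x..y, g s = ∫ s in a..y, g s :=
    intervalIntegral.integral_add_adjacent_intervals hg.intervalIntegrable hg.intervalIntegrable
  have h2 : 0 ≤ ∫ s in x..y, g s :=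
    intervalIntegral.integral_nonneg hxy fun u _ => hpos u
  simp only []
  linarith

end Aux

set_option maxHeartbeats 2000000 in
theorem statement15 {θL θH : ℝ} (hθL : 0 ≤ θL) (hθ : θL < θH)
    (F₀ : CDF θL θH) (hF₀ : IsPrior F₀)
    (c c' c'' : ℝ → ℝ) (hc : CostAssumptions θL θH F₀.mean c c' c'')
    (qbar : ℝ) (hqbar : 0 < qbar)
    (κ κ' : ℝ → ℝ) (hκ : KappaAssumptions θL θH qbar κ κ')
    (Qs : ℝ → ℝ) (Fs : CDF θL θH)
    (hopt : MonopolistOptimal qbar F₀ c κ Qs Fs)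
    (Q : ℝ → ℝ) (hQ : IsAllocation θL θH qbar Q) (hIC : IsIC F₀ c Q 0 Fs) :
    Fs.integ (fun θ =>
      (θ - κ' (Qs θ)) * (Q θ - Qs θ) - (Vfun θL Q 0 θ - Vfun θL Qs 0 θ)) ≤ 0 := by
  classical
  obtain ⟨hQsA, hQsIC, hopt3⟩ := hopt
  haveI : IsProbabilityMeasure Fs.meas := Fs.aux_isProb
  have hae := Fs.aux_ae_mem hθ.le
  -- clamp to [θL, θH]
  set cl : ℝ → ℝ := fun t => max θL (min t θH) with hcldef
  have hcl_mono : Monotone cl := fun a b hab => max_le_max le_rfl (min_le_min hab le_rfl)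
  have hcl_cont : Continuous cl := continuous_const.max (continuous_id.min continuous_const)
  have hcl_mem : ∀ t, cl t ∈ Set.Icc θL θH :=
    fun t => ⟨le_max_left _ _, max_le hθ.le (min_le_right _ _)⟩
  have hcl_id : ∀ t ∈ Set.Icc θL θH, cl t = t := by
    intro t ht
    simp only [hcldef]
    rw [min_eq_left ht.2, max_eq_right ht.1]
  -- clamp to [0, qbar]
  set cq : ℝ → ℝ := fun q => max 0 (min q qbar) with hcqdef
  have hcq_mem : ∀ q, cq q ∈ Set.Icc (0:ℝ) qbar :=
    fun q => ⟨le_max_left _ _, max_le hqbar.le (min_le_right _ _)⟩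
  have hcq_id : ∀ q ∈ Set.Icc (0:ℝ) qbar, cq q = q := by
    intro q hq
    simp only [hcqdef]
    rw [min_eq_left hq.2, max_eq_right hq.1]
  have hcq_cont : Continuous cq := continuous_const.max (continuous_id.min continuous_const)
  -- kappa pieces
  have hκcont : ContinuousOn κ (Set.Icc 0 qbar) :=
    fun q hq => (hκ.hasDeriv q hq).continuousWithinAt
  obtain ⟨Cκ, hCκ⟩ :=
    (isCompact_Icc : IsCompact (Set.Icc (0:ℝ) qbar)).exists_bound_of_continuousOn hκcont
  obtain ⟨Cκ', hCκ'⟩ :=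
    (isCompact_Icc : IsCompact (Set.Icc (0:ℝ) qbar)).exists_bound_of_continuousOn hκ.contDeriv
  set κc : ℝ → ℝ := fun q => κ (cq q) with hκcdef
  set κ'c : ℝ → ℝ := fun q => κ' (cq q) with hκ'cdef
  have hκc_cont : Continuous κc := hκcont.comp_continuous hcq_cont hcq_mem
  have hκ'c_cont : Continuous κ'c := hκ.contDeriv.comp_continuous hcq_cont hcq_mem
  have hκc_eq : ∀ q ∈ Set.Icc (0:ℝ) qbar, κc q = κ q := by
    intro q hq; simp only [hκcdef]; rw [hcq_id q hq]
  have hκ'c_eq : ∀ q ∈ Set.Icc (0:ℝ) qbar, κ'c q = κ' q := by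
    intro q hq; simp only [hκ'cdef]; rw [hcq_id q hq]
  have hκc_bd : ∀ q, |κc q| ≤ Cκ := fun q => by
    simpa [Real.norm_eq_abs] using hCκ (cq q) (hcq_mem q)
  have hκ'c_bd : ∀ q, |κ'c q| ≤ Cκ' := fun q => by
    simpa [Real.norm_eq_abs] using hCκ' (cq q) (hcq_mem q)
  have hCκ_nn : 0 ≤ Cκ := le_trans (abs_nonneg _) (hκc_bd 0)
  have hCκ'_nn : 0 ≤ Cκ' := le_trans (abs_nonneg _) (hκ'c_bd 0)
  -- cost surrogate
  obtain ⟨Cc, hCc⟩ :=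
    (isCompact_Icc : IsCompact (Set.Icc θL θH)).exists_bound_of_continuousOn hc.cont
  set ccl : ℝ → ℝ := fun θ => c (cl θ) with hccldef
  have hccl_cont : Continuous ccl := hc.cont.comp_continuous hcl_cont hcl_mem
  have hccl_bd : ∀ θ, |ccl θ| ≤ Cc := fun θ => by
    simpa [Real.norm_eq_abs] using hCc (cl θ) (hcl_mem θ)
  have hccl_eq : ∀ θ ∈ Set.Icc θL θH, ccl θ = c θ := by
    intro θ hθm; simp only [hccldef]; rw [hcl_id θ hθm]
  -- allocation surrogates
  set Qc : ℝ → ℝ := fun t => Q (cl t) with hQcdef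
  set Qsc : ℝ → ℝ := fun t => Qs (cl t) with hQscdef
  have hQc_mono : Monotone Qc := fun a b hab => hQ.1 (hcl_mem a) (hcl_mem b) (hcl_mono hab)
  have hQsc_mono : Monotone Qsc := fun a b hab => hQsA.1 (hcl_mem a) (hcl_mem b) (hcl_mono hab)
  have hQc_mem : ∀ t, Qc t ∈ Set.Icc (0:ℝ) qbar := fun t => hQ.2 _ (hcl_mem t)
  have hQsc_mem : ∀ t, Qsc t ∈ Set.Icc (0:ℝ) qbar := fun t => hQsA.2 _ (hcl_mem t)
  have hQc_eq : ∀ θ ∈ Set.Icc θL θH, Qc θ = Q θ := by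
    intro θ hθm; simp only [hQcdef]; rw [hcl_id θ hθm]
  have hQsc_eq : ∀ θ ∈ Set.Icc θL θH, Qsc θ = Qs θ := by
    intro θ hθm; simp only [hQscdef]; rw [hcl_id θ hθm]
  -- V surrogates
  set VQ : ℝ → ℝ := fun t => ∫ s in θL..(cl t), Qc s with hVQdef
  set VQs : ℝ → ℝ := fun t => ∫ s in θL..(cl t), Qsc s with hVQsdef
  have hVQ_mono : Monotone VQ :=
    (aux_primitive_mono hQc_mono (fun t => (hQc_mem t).1) θL).comp hcl_mono
  have hVQs_mono : Monotone VQs :=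
    (aux_primitive_mono hQsc_mono (fun t => (hQsc_mem t).1) θL).comp hcl_mono
  set Vb : ℝ := qbar * (θH - θL) with hVbdef
  have hVbound : ∀ (g : ℝ → ℝ), Monotone g → (∀ t, g t ∈ Set.Icc (0:ℝ) qbar) →
      ∀ t, |∫ s in θL..(cl t), g s| ≤ Vb := by
    intro g hg hgm t
    have h0 : (0:ℝ) ≤ ∫ s in θL..(cl t), g s :=
      intervalIntegral.integral_nonneg (hcl_mem t).1 fun u _ => (hgm u).1
    have h1 : (∫ s in θL..(cl t), g s) ≤ ∫ s in θL..(cl t), qbar :=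
      intervalIntegral.integral_mono_on (hcl_mem t).1 hg.intervalIntegrable
        intervalIntegrable_const (fun u _ => (hgm u).2)
    rw [intervalIntegral.integral_const, smul_eq_mul] at h1
    rw [abs_of_nonneg h0]
    have h2 := (hcl_mem t).2
    have h3 := (hcl_mem t).1
    simp only [hVbdef]
    nlinarith
  have hVQ_bd : ∀ t, |VQ t| ≤ Vb := hVbound Qc hQc_mono hQc_mem
  have hVQs_bd : ∀ t, |VQs t| ≤ Vb := hVbound Qsc hQsc_mono hQsc_mem
  have hVb_nn : 0 ≤ Vb := le_trans (abs_nonneg _) (hVQ_bd 0)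
  -- measurability
  have hmQc : Measurable Qc := hQc_mono.measurable
  have hmQsc : Measurable Qsc := hQsc_mono.measurable
  have hmcl : Measurable cl := hcl_mono.measurable
  have hmVQ : Measurable VQ := hVQ_mono.measurable
  have hmVQs : Measurable VQs := hVQs_mono.measurable
  set B : ℝ := |θL| + |θH| with hBdef
  have hcl_bd : ∀ t, |cl t| ≤ B := by
    intro t
    rcases hcl_mem t with ⟨h1, h2⟩
    rw [abs_le]
    constructor
    · nlinarith [neg_abs_le θL, abs_nonneg θH]
    · nlinarith [le_abs_self θH, abs_nonneg θL]
  have hD_bd : ∀ t, |Qc t - Qsc t| ≤ qbar := by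
    intro t
    rcases hQc_mem t with ⟨h1, h2⟩
    rcases hQsc_mem t with ⟨h3, h4⟩
    rw [abs_le]; constructor <;> linarith
  -- V identities on Icc
  have hVeq : ∀ (g : ℝ → ℝ), MonotoneOn g (Set.Icc θL θH) → ∀ θ ∈ Set.Icc θL θH,
      Vfun θL g 0 θ = ∫ s in θL..θ, g (cl s) := by
    intro g hg θ hθm
    have heq : Set.EqOn g (fun s => g (cl s)) (Set.uIcc θL θ) := by
      intro s hs
      rw [Set.uIcc_of_le hθm.1] at hs
      have hmem : s ∈ Set.Icc θL θH := ⟨hs.1, hs.2.trans hθm.2⟩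
      simp [hcl_id s hmem]
    simp only [Vfun, zero_add]
    exact intervalIntegral.integral_congr heq
  have hVQ_eq : ∀ θ ∈ Set.Icc θL θH, Vfun θL Q 0 θ = VQ θ := by
    intro θ hθm
    rw [hVeq Q hQ.1 θ hθm]
    simp only [hVQdef]
    rw [hcl_id θ hθm]
  have hVQs_eq : ∀ θ ∈ Set.Icc θL θH, Vfun θL Qs 0 θ = VQs θ := by
    intro θ hθm
    rw [hVeq Qs hQsA.1 θ hθm]
    simp only [hVQsdef]
    rw [hcl_id θ hθm]
  -- the perturbed allocations
  set QT : ℝ → ℝ → ℝ := fun t θ => Qsc θ + t * (Qc θ - Qsc θ) with hQTdef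
  have hQT_mem : ∀ t, 0 ≤ t → t ≤ 1 → ∀ θ, QT t θ ∈ Set.Icc (0:ℝ) qbar := by
    intro t ht0 ht1 θ
    rcases hQc_mem θ with ⟨h1, h2⟩
    rcases hQsc_mem θ with ⟨h3, h4⟩
    constructor
    · simp only [hQTdef]; nlinarith
    · simp only [hQTdef]; nlinarith
  have hQT_mono : ∀ t, 0 ≤ t → t ≤ 1 → Monotone (QT t) := by
    intro t ht0 ht1 a b hab
    have h1 := hQc_mono hab
    have h2 := hQsc_mono hab
    simp only [hQTdef]
    nlinarith
  have hQT_alloc : ∀ t, 0 ≤ t → t ≤ 1 → IsAllocation θL θH qbar (QT t) :=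
    fun t ht0 ht1 => ⟨(hQT_mono t ht0 ht1).monotoneOn _, fun θ _ => hQT_mem t ht0 ht1 θ⟩
  -- V of perturbed allocation on Icc
  have hVQT_eq : ∀ t, ∀ θ ∈ Set.Icc θL θH,
      Vfun θL (QT t) 0 θ = (1 - t) * VQs θ + t * VQ θ := by
    intro t θ hθm
    have hstep : Vfun θL (QT t) 0 θ = ∫ s in θL..θ, ((1 - t) * Qsc s + t * Qc s) := by
      simp only [Vfun, zero_add]
      refine intervalIntegral.integral_congr fun s _ => ?_
      simp only [hQTdef]; ring
    rw [hstep, intervalIntegral.integral_add ((hQsc_mono.intervalIntegrable).const_mul _)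
      ((hQc_mono.intervalIntegrable).const_mul _),
      intervalIntegral.integral_const_mul, intervalIntegral.integral_const_mul]
    have e1 : VQs θ = ∫ s in θL..θ, Qsc s := by
      simp only [hVQsdef]; rw [hcl_id θ hθm]
    have e2 : VQ θ = ∫ s in θL..θ, Qc s := by
      simp only [hVQdef]; rw [hcl_id θ hθm]
    rw [e1, e2]
  -- the objective splits linearly
  have hsplit : ∀ (F' : CDF θL θH), ∀ t : ℝ,
      F'.integ (fun θ => Vfun θL (QT t) 0 θ - c θ)
        = (1 - t) * F'.integ (fun θ => Vfun θL Qs 0 θ - c θ)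
          + t * F'.integ (fun θ => Vfun θL Q 0 θ - c θ) := by
    intro F' t
    haveI : IsProbabilityMeasure F'.meas := F'.aux_isProb
    have hae' := F'.aux_ae_mem hθ.le
    have int1 : Integrable (fun θ => VQs θ - ccl θ) F'.meas := by
      refine aux_integrable (hmVQs.sub hccl_cont.measurable) (M := Vb + Cc) ?_
      intro θ
      have := hVQs_bd θ; have := hccl_bd θ
      rw [abs_le] at *
      constructor <;> [linarith [this.1, (hVQs_bd θ)]; skip]
      · linarith [(abs_le.mp (hVQs_bd θ)).2, (abs_le.mp (hccl_bd θ)).1]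
    have int2 : Integrable (fun θ => VQ θ - ccl θ) F'.meas := by
      refine aux_integrable (hmVQ.sub hccl_cont.measurable) (M := Vb + Cc) ?_
      intro θ
      have h1 := abs_le.mp (hVQ_bd θ)
      have h2 := abs_le.mp (hccl_bd θ)
      rw [abs_le]; constructor <;> linarith [h1.1, h1.2, h2.1, h2.2]
    have e0 : (fun θ => Vfun θL (QT t) 0 θ - c θ)
        =ᵐ[F'.meas] fun θ => (1 - t) * (VQs θ - ccl θ) + t * (VQ θ - ccl θ) := by
      filter_upwards [hae'] with θ hθm
      rw [hVQT_eq t θ hθm, ← hccl_eq θ hθm]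
      ring
    have e1 : (fun θ => Vfun θL Qs 0 θ - c θ) =ᵐ[F'.meas] fun θ => VQs θ - ccl θ := by
      filter_upwards [hae'] with θ hθm
      rw [hVQs_eq θ hθm, hccl_eq θ hθm]
    have e2 : (fun θ => Vfun θL Q 0 θ - c θ) =ᵐ[F'.meas] fun θ => VQ θ - ccl θ := by
      filter_upwards [hae'] with θ hθm
      rw [hVQ_eq θ hθm, hccl_eq θ hθm]
    simp only [CDF.integ]
    rw [integral_congr_ae e0, integral_congr_ae e1, integral_congr_ae e2,
      integral_add (int1.const_mul _) (int2.const_mul _),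
      integral_const_mul, integral_const_mul]
  -- the perturbed mechanism is IC
  have hICt : ∀ t, 0 ≤ t → t ≤ 1 → IsIC F₀ c (QT t) 0 Fs := by
    intro t ht0 ht1
    refine ⟨hIC.1, ?_⟩
    intro F' hF'
    rw [hsplit F' t, hsplit Fs t]
    have h1 := hQsIC.2 F' hF'
    have h2 := hIC.2 F' hF'
    nlinarith
  -- profit comparison from optimality
  have hprof : ∀ t, 0 ≤ t → t ≤ 1 →
      Fs.integ (profit θL κ (QT t) 0) ≤ Fs.integ (profit θL κ Qs 0) :=
    fun t ht0 ht1 => hopt3 (QT t) 0 Fs (hQT_alloc t ht0 ht1) le_rfl (hICt t ht0 ht1)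
  -- surrogate profits
  have hprofT_ae : ∀ t, 0 ≤ t → t ≤ 1 → (profit θL κ (QT t) 0)
      =ᵐ[Fs.meas] fun θ => cl θ * QT t θ - ((1 - t) * VQs θ + t * VQ θ) - κc (QT t θ) := by
    intro t ht0 ht1
    filter_upwards [hae] with θ hθm
    simp only [profit]
    rw [hVQT_eq t θ hθm, hcl_id θ hθm, hκc_eq _ (hQT_mem t ht0 ht1 θ)]
  have hps_ae : profit θL κ Qs 0
      =ᵐ[Fs.meas] fun θ => cl θ * Qsc θ - VQs θ - κc (Qsc θ) := by
    filter_upwards [hae] with θ hθm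
    simp only [profit]
    rw [hcl_id θ hθm, hQsc_eq θ hθm, hκc_eq _ (hQsA.2 θ hθm), hVQs_eq θ hθm]
  -- integrability
  have int_h1 : Integrable (fun θ => cl θ * (Qc θ - Qsc θ) - (VQ θ - VQs θ)) Fs.meas := by
    refine aux_integrable ((hmcl.mul (hmQc.sub hmQsc)).sub (hmVQ.sub hmVQs))
      (M := B * qbar + 2 * Vb) ?_
    intro t
    have h3 := abs_le.mp (hVQ_bd t); have h4 := abs_le.mp (hVQs_bd t)
    have h5 : |cl t * (Qc t - Qsc t)| ≤ B * qbar := by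
      rw [abs_mul]
      exact mul_le_mul (hcl_bd t) (hD_bd t) (abs_nonneg _) (le_trans (abs_nonneg _) (hcl_bd t))
    have h6 := abs_le.mp h5
    rw [abs_le]; constructor <;> linarith [h6.1, h6.2, h3.1, h3.2, h4.1, h4.2]
  have int_h2 : Integrable (fun θ => κ'c (Qsc θ) * (Qc θ - Qsc θ)) Fs.meas := by
    refine aux_integrable ((hκ'c_cont.measurable.comp hmQsc).mul (hmQc.sub hmQsc))
      (M := Cκ' * qbar) ?_
    intro t
    rw [abs_mul]
    exact mul_le_mul (hκ'c_bd _) (hD_bd t) (abs_nonneg _) hCκ'_nn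
  have int_psS : Integrable (fun θ => cl θ * Qsc θ - VQs θ - κc (Qsc θ)) Fs.meas := by
    refine aux_integrable (((hmcl.mul hmQsc).sub hmVQs).sub
      (hκc_cont.measurable.comp hmQsc)) (M := B * qbar + Vb + Cκ) ?_
    intro t
    have h2 := hQsc_mem t
    have h5 : |cl t * Qsc t| ≤ B * qbar := by
      rw [abs_mul]
      refine mul_le_mul (hcl_bd t) ?_ (abs_nonneg _) (le_trans (abs_nonneg _) (hcl_bd t))
      rw [abs_of_nonneg h2.1]; exact h2.2
    have h6 := abs_le.mp h5
    have h3 := abs_le.mp (hVQs_bd t)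
    have h4 := abs_le.mp (hκc_bd (Qsc t))
    rw [abs_le]; constructor <;> linarith [h6.1, h6.2, h3.1, h3.2, h4.1, h4.2]
  -- difference quotient bounds
  have htan := aux_tangent hκ.strictConvex.convexOn hκ.hasDeriv
  set C : ℝ := Cκ' * qbar + 2 * Cκ with hCdef
  have hquot : ∀ t, 0 < t → t ≤ 1 → ∀ θ,
      κ'c (Qsc θ) * (Qc θ - Qsc θ) ≤ (κc (QT t θ) - κc (Qsc θ)) / t
      ∧ (κc (QT t θ) - κc (Qsc θ)) / t ≤ κc (Qc θ) - κc (Qsc θ) := by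
    intro t ht0 ht1 θ
    have hx := hQsc_mem θ
    have hy := hQc_mem θ
    have hz := hQT_mem t ht0.le ht1 θ
    have e1 : κc (QT t θ) = κ (QT t θ) := hκc_eq _ hz
    have e2 : κc (Qsc θ) = κ (Qsc θ) := hκc_eq _ hx
    have e3 : κc (Qc θ) = κ (Qc θ) := hκc_eq _ hy
    have e4 : κ'c (Qsc θ) = κ' (Qsc θ) := hκ'c_eq _ hx
    have hzz : QT t θ = Qsc θ + t * (Qc θ - Qsc θ) := rfl
    constructor
    · rw [e1, e2, e4, le_div_iff₀ ht0]
      have h1 := htan (Qsc θ) hx (QT t θ) hz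
      rw [hzz] at h1
      nlinarith [h1]
    · rw [e1, e2, e3, div_le_iff₀ ht0]
      have hcvx := hκ.strictConvex.convexOn.2 hx hy
        (by linarith : (0:ℝ) ≤ 1 - t) ht0.le (by ring)
      have hpt : (1 - t) • Qsc θ + t • Qc θ = QT t θ := by
        simp only [smul_eq_mul, hzz]; ring
      rw [hpt] at hcvx
      simp only [smul_eq_mul] at hcvx
      nlinarith [hcvx]
  have hmg : ∀ t : ℝ, Measurable (fun θ => (κc (QT t θ) - κc (Qsc θ)) / t) := by
    intro t
    have hQTm : Measurable (fun θ => Qsc θ + t * (Qc θ - Qsc θ)) :=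
      hmQsc.add ((hmQc.sub hmQsc).const_mul t)
    have h1 : Measurable (fun θ => κc (QT t θ)) := hκc_cont.measurable.comp hQTm
    have h2 : Measurable (fun θ => κc (Qsc θ)) := hκc_cont.measurable.comp hmQsc
    exact (h1.sub h2).div_const t
  have hgbd : ∀ t, 0 < t → t ≤ 1 → ∀ θ, |(κc (QT t θ) - κc (Qsc θ)) / t| ≤ C := by
    intro t ht0 ht1 θ
    have hq := hquot t ht0 ht1 θ
    have h7 : |κ'c (Qsc θ) * (Qc θ - Qsc θ)| ≤ Cκ' * qbar := by
      rw [abs_mul]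
      exact mul_le_mul (hκ'c_bd _) (hD_bd θ) (abs_nonneg _) hCκ'_nn
    have h8 := abs_le.mp h7
    have h9 := abs_le.mp (hκc_bd (Qc θ))
    have h10 := abs_le.mp (hκc_bd (Qsc θ))
    have hCq : 0 ≤ Cκ' * qbar := mul_nonneg hCκ'_nn hqbar.le
    rw [abs_le]
    simp only [hCdef]
    constructor
    · linarith [hq.1]
    · linarith [hq.2]
  -- key inequality for each t
  have hA_le : ∀ t, 0 < t → t ≤ 1 →
      (∫ θ, (cl θ * (Qc θ - Qsc θ) - (VQ θ - VQs θ)) ∂Fs.meas)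
        ≤ ∫ θ, (κc (QT t θ) - κc (Qsc θ)) / t ∂Fs.meas := by
    intro t ht0 ht1
    have int_g : Integrable (fun θ => (κc (QT t θ) - κc (Qsc θ)) / t) Fs.meas :=
      aux_integrable (hmg t) (hgbd t ht0 ht1)
    have key := hprof t ht0.le ht1
    simp only [CDF.integ] at key
    rw [integral_congr_ae (hprofT_ae t ht0.le ht1), integral_congr_ae hps_ae] at key
    have hrw : (fun θ => cl θ * QT t θ - ((1 - t) * VQs θ + t * VQ θ) - κc (QT t θ))
        = fun θ => (cl θ * Qsc θ - VQs θ - κc (Qsc θ))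
          + t * (cl θ * (Qc θ - Qsc θ) - (VQ θ - VQs θ))
          - t * ((κc (QT t θ) - κc (Qsc θ)) / t) := by
      funext θ
      have hzz : QT t θ = Qsc θ + t * (Qc θ - Qsc θ) := rfl
      rw [hzz]
      field_simp
      ring
    have intsum : Integrable (fun θ => (cl θ * Qsc θ - VQs θ - κc (Qsc θ))
        + t * (cl θ * (Qc θ - Qsc θ) - (VQ θ - VQs θ))) Fs.meas :=
      int_psS.add (int_h1.const_mul t)
    have intg2 : Integrable (fun θ => t * ((κc (QT t θ) - κc (Qsc θ)) / t)) Fs.meas :=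
      int_g.const_mul t
    rw [hrw, integral_sub intsum intg2, integral_add int_psS (int_h1.const_mul t),
      integral_const_mul, integral_const_mul] at key
    have := (mul_le_mul_iff_right₀ ht0).mp (by linarith [key] :
      t * (∫ θ, (cl θ * (Qc θ - Qsc θ) - (VQ θ - VQs θ)) ∂Fs.meas)
        ≤ t * ∫ θ, (κc (QT t θ) - κc (Qsc θ)) / t ∂Fs.meas)
    exact this
  -- sequence t_n = 1/(n+1) and dominated convergence
  have htn0 : ∀ n : ℕ, 0 < 1 / ((n:ℝ) + 1) := fun n => by positivity
  have htn1 : ∀ n : ℕ, 1 / ((n:ℝ) + 1) ≤ 1 := fun n => by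
    rw [div_le_one (by positivity)]
    linarith [Nat.cast_nonneg (α := ℝ) n]
  have hlim : ∀ θ, Tendsto (fun n : ℕ => (κc (QT (1 / ((n:ℝ) + 1)) θ) - κc (Qsc θ)) / (1 / ((n:ℝ) + 1)))
      atTop (nhds (κ'c (Qsc θ) * (Qc θ - Qsc θ))) := by
    intro θ
    have hx := hQsc_mem θ
    have hy := hQc_mem θ
    have hφ : HasDerivWithinAt (fun u : ℝ => Qsc θ + u * (Qc θ - Qsc θ))
        (Qc θ - Qsc θ) (Set.Icc (0:ℝ) 1) 0 :=
      ((hasDerivAt_mul_const (Qc θ - Qsc θ)).const_add (Qsc θ)).hasDerivWithinAt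
    have hmaps : Set.MapsTo (fun u : ℝ => Qsc θ + u * (Qc θ - Qsc θ))
        (Set.Icc (0:ℝ) 1) (Set.Icc 0 qbar) := by
      intro u hu
      simp only [Set.mem_Icc] at hu ⊢
      rcases hx with ⟨h1, h2⟩; rcases hy with ⟨h3, h4⟩; rcases hu with ⟨h5, h6⟩
      constructor
      · nlinarith [mul_nonneg h5 h3, mul_nonneg (sub_nonneg.2 h6) h1]
      · nlinarith [mul_le_mul_of_nonneg_left h4 h5,
          mul_le_mul_of_nonneg_left h2 (sub_nonneg.2 h6)]
    have hκder : HasDerivWithinAt κc (κ' (Qsc θ)) (Set.Icc 0 qbar) (Qsc θ) :=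
      (hκ.hasDeriv (Qsc θ) hx).congr (fun q hq => hκc_eq q hq) (hκc_eq _ hx)
    have hcomp : HasDerivWithinAt (fun u : ℝ => κc (Qsc θ + u * (Qc θ - Qsc θ)))
        (κ' (Qsc θ) * (Qc θ - Qsc θ)) (Set.Icc (0:ℝ) 1) 0 := by
      have h := HasDerivWithinAt.comp (x := (0:ℝ))
        (hh₂ := (by simpa using hκder : HasDerivWithinAt κc (κ' (Qsc θ)) (Set.Icc 0 qbar)
          ((fun u : ℝ => Qsc θ + u * (Qc θ - Qsc θ)) 0)))
        (hh := hφ) (hst := hmaps)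
      exact h
    have hslope := hasDerivWithinAt_iff_tendsto_slope.mp hcomp
    have hu : Tendsto (fun n : ℕ => 1 / ((n:ℝ) + 1)) atTop
        (nhdsWithin 0 (Set.Icc (0:ℝ) 1 \ {0})) := by
      rw [tendsto_nhdsWithin_iff]
      exact ⟨tendsto_one_div_add_atTop_nhds_zero_nat,
        Filter.Eventually.of_forall fun n => ⟨⟨(htn0 n).le, htn1 n⟩, ne_of_gt (htn0 n)⟩⟩
    have hfinal := hslope.comp hu
    have hκ'eq : κ'c (Qsc θ) = κ' (Qsc θ) := hκ'c_eq _ hx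
    rw [hκ'eq]
    refine hfinal.congr fun n => ?_
    have hzz : QT (1 / ((n:ℝ) + 1)) θ = Qsc θ + (1 / ((n:ℝ) + 1)) * (Qc θ - Qsc θ) := rfl
    simp only [Function.comp, slope_def_field, hzz]
    rw [sub_zero]
    norm_num
  have hGtend : Tendsto
      (fun n : ℕ => ∫ θ, (κc (QT (1 / ((n:ℝ) + 1)) θ) - κc (Qsc θ)) / (1 / ((n:ℝ) + 1)) ∂Fs.meas)
      atTop (nhds (∫ θ, κ'c (Qsc θ) * (Qc θ - Qsc θ) ∂Fs.meas)) := by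
    refine tendsto_integral_of_dominated_convergence (fun _ => C)
      (fun n => (hmg _).aestronglyMeasurable) (integrable_const C) (fun n => ?_) ?_
    · exact Filter.Eventually.of_forall fun θ => by
        rw [Real.norm_eq_abs]; exact hgbd _ (htn0 n) (htn1 n) θ
    · exact Filter.Eventually.of_forall hlim
  have hA_leK : (∫ θ, (cl θ * (Qc θ - Qsc θ) - (VQ θ - VQs θ)) ∂Fs.meas)
      ≤ ∫ θ, κ'c (Qsc θ) * (Qc θ - Qsc θ) ∂Fs.meas :=
    ge_of_tendsto hGtend (Filter.Eventually.of_forall fun n => hA_le _ (htn0 n) (htn1 n))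
  -- conclude
  have hfinal_ae : (fun θ =>
      (θ - κ' (Qs θ)) * (Q θ - Qs θ) - (Vfun θL Q 0 θ - Vfun θL Qs 0 θ))
      =ᵐ[Fs.meas] fun θ => (cl θ * (Qc θ - Qsc θ) - (VQ θ - VQs θ))
        - κ'c (Qsc θ) * (Qc θ - Qsc θ) := by
    filter_upwards [hae] with θ hθm
    have e1 : Qc θ = Q θ := hQc_eq θ hθm
    have e2 : Qsc θ = Qs θ := hQsc_eq θ hθm
    have e3 : cl θ = θ := hcl_id θ hθm
    have e4 : κ'c (Qs θ) = κ' (Qs θ) := hκ'c_eq _ (hQsA.2 θ hθm)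
    have e5 : VQ θ = Vfun θL Q 0 θ := (hVQ_eq θ hθm).symm
    have e6 : VQs θ = Vfun θL Qs 0 θ := (hVQs_eq θ hθm).symm
    rw [e1, e2, e3, e4, e5, e6]
    ring
  have hgoal_eq : Fs.integ (fun θ =>
      (θ - κ' (Qs θ)) * (Q θ - Qs θ) - (Vfun θL Q 0 θ - Vfun θL Qs 0 θ))
      = (∫ θ, (cl θ * (Qc θ - Qsc θ) - (VQ θ - VQs θ)) ∂Fs.meas)
        - ∫ θ, κ'c (Qsc θ) * (Qc θ - Qsc θ) ∂Fs.meas := by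
    simp only [CDF.integ]
    rw [integral_congr_ae hfinal_ae, integral_sub int_h1 int_h2]
  rw [hgoal_eq]
  linarith [hA_leK]
end
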